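/- arXiv:1810.01731 — 11 statements merged into one kernel-verified Lean document; each statement's English description precedes it below -/
import Mathlib

section
/- Let x1, x2, x3, a1, a2, a3, b12, b13, b23, c be non-negative real numbers with x1 + x2 + x3 + a1 + a2 + a3 + b12 + b13 + b23 + c = 1, and suppose that for each permutation {i,j,k} = {1,2,3} one has b_ij ≥ 2·x_i, b_ij ≥ 2·x_j, and b_ij ≥ (1/2)·x_k (i.e., b23 ≥ max(2x2, 2x3, x1/2), b13 ≥ max(2x1, 2x3, x2/2), b12 ≥ max(2x1, 2x2, x3/2)). Then there exist q1, q2, q3 ∈ [0,1] with q1 + q2 + q3 = 2 such that q1·(b23 + x2 + x3) + q1²·(a2 + a3) + q1³·c ≤ 8/27, q2·(b13 + x1 + x3) + q2²·(a1 + a3) + q2³·c ≤ 8/27, and q3·(b12 + x1 + x2) + q3²·(a1 + a2) + q3³·c ≤ 8/27. -/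
set_option maxHeartbeats 2000000

lemma pnonneg (q : ℝ) (h0 : 0 ≤ q) (h1 : q ≤ 1) : 0 ≤ q - q^2 := by nlinarith
lemma ponequarter (q : ℝ) : q - q^2 ≤ 1/4 := by nlinarith [sq_nonneg (2*q-1)]
lemma psum (q1 q2 q3 : ℝ) (hs : q1 + q2 + q3 = 2) :
    (q1-q1^2) + (q2-q2^2) + (q3-q3^2) ≤ 2/3 := by
  nlinarith [sq_nonneg (q1-q2), sq_nonneg (q1-q3), sq_nonneg (q2-q3)]
lemma leafB3 (q1 q2 q3 : ℝ) (h10 : 0 ≤ q1) (h11 : q1 ≤ 1) (h20 : 0 ≤ q2) (h21 : q2 ≤ 1)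
    (h30 : 0 ≤ q3) (h31 : q3 ≤ 1) (hs : q1 + q2 + q3 = 2) :
    4/9 < (q2-q2^2) + (q3-q3^2) →
    4*(q1-q1^2) + 13*(q2-q2^2) + 13*(q3-q3^2) ≤ 64/9 := by
  intro hreg
  nlinarith [sq_nonneg (q2-q3), sq_nonneg (q1-q2), sq_nonneg (q1-q3), sq_nonneg (2*q2-1),
    sq_nonneg (2*q3-1), sq_nonneg (2*q1-1), sq_nonneg (q2+q3-7/6), sq_nonneg (q1-4/5),
    mul_nonneg h10 h20, mul_nonneg h20 h30, mul_nonneg h10 h30]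
lemma rle (q : ℝ) (h0 : 0 ≤ q) (h1 : q ≤ 1) : (1-q)*q^2 ≤ 4/27 := by
  nlinarith [mul_nonneg (by linarith : (0:ℝ) ≤ 3*q+1) (sq_nonneg (3*q-2))]
lemma cubesum (q1 q2 q3 : ℝ) (h10 : 0 ≤ q1) (h11 : q1 ≤ 1) (h20 : 0 ≤ q2) (h21 : q2 ≤ 1)
    (h30 : 0 ≤ q3) (h31 : q3 ≤ 1) (hs : q1 + q2 + q3 = 2) :
    (1-q1)*q1^3 + (1-q2)*q2^3 + (1-q3)*q3^3 ≤ 8/27 := by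
  nlinarith [sq_nonneg (q1-q2), sq_nonneg (q1-q3), sq_nonneg (q2-q3),
    sq_nonneg (q1+q2-4/3), sq_nonneg (q1+q3-4/3), sq_nonneg (q2+q3-4/3),
    mul_nonneg (mul_nonneg h10 h20) h30, sq_nonneg (q1*q2 - q1*q3),
    mul_nonneg h10 h20, mul_nonneg h10 h30, mul_nonneg h20 h30]

lemma fmono (B A C q q' : ℝ) (hB : 0 ≤ B) (hA : 0 ≤ A) (hC : 0 ≤ C)
    (h0 : 0 ≤ q) (h : q ≤ q') :
    q*B + q^2*A + q^3*C ≤ q'*B + q'^2*A + q'^3*C := by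
  have h0' : 0 ≤ q' := h0.trans h
  have e2 : q^2 ≤ q'^2 := by nlinarith
  have e3 : q^3 ≤ q'^3 := by nlinarith [mul_nonneg h0 h0', sq_nonneg q, sq_nonneg q']
  nlinarith [mul_le_mul_of_nonneg_right h hB, mul_le_mul_of_nonneg_right e2 hA,
    mul_le_mul_of_nonneg_right e3 hC]

lemma exists_sup (B A C : ℝ) :
    ∃ s, s ∈ Set.Icc (0:ℝ) 1 ∧ s*B + s^2*A + s^3*C ≤ 8/27 ∧
      ∀ u, u ∈ Set.Icc (0:ℝ) 1 → s < u → 8/27 < u*B + u^2*A + u^3*C := by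
  set S : Set ℝ := {q | q ∈ Set.Icc (0:ℝ) 1 ∧ q*B + q^2*A + q^3*C ≤ 8/27} with hS
  have hne : S.Nonempty := ⟨0, ⟨le_rfl, zero_le_one⟩, by norm_num⟩
  have hba : BddAbove S := ⟨1, fun y hy => hy.1.2⟩
  have hcl : IsClosed S := by
    have : S = Set.Icc (0:ℝ) 1 ∩ {q : ℝ | q*B + q^2*A + q^3*C ≤ 8/27} := by
      ext y; simp [hS, Set.mem_inter_iff]
    rw [this]
    exact isClosed_Icc.inter (isClosed_le (by fun_prop) continuous_const)
  have hmem := hcl.csSup_mem hne hba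
  refine ⟨sSup S, hmem.1, hmem.2, fun u hu hlt => ?_⟩
  by_contra hcon
  push_neg at hcon
  exact absurd (le_csSup hba ⟨hu, hcon⟩) (not_le.mpr hlt)

lemma transfer_lemma (s1 s2 s3 d1 d2 d3 x1 x2 x3 B1 B2 B3
    c11 c12 c13 c21 c23 c31 c32 : ℝ)
    (hx1 : 0 ≤ x1) (hx2 : 0 ≤ x2) (hx3 : 0 ≤ x3)
    (hB1 : 0 ≤ B1) (hB2 : 0 ≤ B2) (hB3 : 0 ≤ B3)
    (hc11 : 0 ≤ c11) (hc12 : 0 ≤ c12) (hc13 : 0 ≤ c13)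
    (hc21 : 0 ≤ c21) (hc23 : 0 ≤ c23)
    (hc31 : 0 ≤ c31) (hc32 : 0 ≤ c32)
    (hB1x2 : 2*x2 ≤ B1) (hB1x3 : 2*x3 ≤ B1) (hB1x1 : x1 ≤ 2*B1)
    (hB2x1 : 2*x1 ≤ B2) (hB2x3 : 2*x3 ≤ B2)
    (hB3x1 : 2*x1 ≤ B3) (hB3x2 : 2*x2 ≤ B3)
    (cap1 : c12 + c13 + 4*c11 ≤ 2*s1)
    (cap2 : c21 + c23 ≤ 2*s2)
    (cap3 : c31 + c32 ≤ 2*s3)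
    (cov1 : d1 ≤ c11 + c21 + c31)
    (cov2 : d2 ≤ c12 + c32)
    (cov3 : d3 ≤ c13 + c23) :
    d1*x1 + d2*x2 + d3*x3 ≤ s1*B1 + s2*B2 + s3*B3 := by
  have t1 : d1*x1 ≤ (c11 + c21 + c31)*x1 := mul_le_mul_of_nonneg_right cov1 hx1
  have t2 : d2*x2 ≤ (c12 + c32)*x2 := mul_le_mul_of_nonneg_right cov2 hx2
  have t3 : d3*x3 ≤ (c13 + c23)*x3 := mul_le_mul_of_nonneg_right cov3 hx3
  have u11 : c11*x1 ≤ c11*(2*B1) := mul_le_mul_of_nonneg_left hB1x1 hc11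
  have u12 : c12*x2 ≤ c12*(B1/2) := mul_le_mul_of_nonneg_left (by linarith) hc12
  have u13 : c13*x3 ≤ c13*(B1/2) := mul_le_mul_of_nonneg_left (by linarith) hc13
  have u21 : c21*x1 ≤ c21*(B2/2) := mul_le_mul_of_nonneg_left (by linarith) hc21
  have u23 : c23*x3 ≤ c23*(B2/2) := mul_le_mul_of_nonneg_left (by linarith) hc23
  have u31 : c31*x1 ≤ c31*(B3/2) := mul_le_mul_of_nonneg_left (by linarith) hc31
  have u32 : c32*x2 ≤ c32*(B3/2) := mul_le_mul_of_nonneg_left (by linarith) hc32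
  have v1 : (2*c11 + c12/2 + c13/2)*B1 ≤ s1*B1 :=
    mul_le_mul_of_nonneg_right (by linarith) hB1
  have v2 : (c21/2 + c23/2)*B2 ≤ s2*B2 := mul_le_mul_of_nonneg_right (by linarith) hB2
  have v3 : (c31/2 + c32/2)*B3 ≤ s3*B3 := mul_le_mul_of_nonneg_right (by linarith) hB3
  nlinarith [t1, t2, t3, u11, u12, u13, u21, u23, u31, u32, v1, v2, v3]

lemma xb_abstract (P1 P2 P3 x1 x2 x3 B1 B2 B3 : ℝ)
    (hP0 : 0 ≤ P1) (h12 : P1 ≤ P2) (h23 : P2 ≤ P3) (hP4 : P3 ≤ 1/4)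
    (hS : P1 + P2 + P3 ≤ 2/3)
    (hB3leaf : 4/9 < P2 + P3 → 4*P1 + 13*P2 + 13*P3 ≤ 64/9)
    (hx1 : 0 ≤ x1) (hx2 : 0 ≤ x2) (hx3 : 0 ≤ x3)
    (hB1x2 : 2*x2 ≤ B1) (hB1x3 : 2*x3 ≤ B1) (hB1x1 : x1 ≤ 2*B1)
    (hB2x1 : 2*x1 ≤ B2) (hB2x3 : 2*x3 ≤ B2) (hB2x2 : x2 ≤ 2*B2)
    (hB3x1 : 2*x1 ≤ B3) (hB3x2 : 2*x2 ≤ B3) (hB3x3 : x3 ≤ 2*B3) :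
    (P2+P3-8/27)*x1 + (P1+P3-8/27)*x2 + (P1+P2-8/27)*x3
      ≤ (8/27-P1)*B1 + (8/27-P2)*B2 + (8/27-P3)*B3 := by
  have hB1 : 0 ≤ B1 := by linarith
  have hB2 : 0 ≤ B2 := by linarith
  have hB3 : 0 ≤ B3 := by linarith
  rcases le_or_gt (P2+P3) (4/9) with hA | hreg
  · exact transfer_lemma _ _ _ _ _ _ _ _ _ _ _ _ 0 (8/27-P1) (8/27-P1)
      (8/27-P2) (8/27-P2) (8/27-P3) (8/27-P3) hx1 hx2 hx3 hB1 hB2 hB3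
      le_rfl (by linarith) (by linarith) (by linarith) (by linarith) (by linarith)
      (by linarith) hB1x2 hB1x3 hB1x1 hB2x1 hB2x3 hB3x1 hB3x2
      (by linarith) (by linarith) (by linarith) (by linarith) (by linarith) (by linarith)
  · rcases le_or_gt (P1+P3-8/27) 0 with hd2 | hd2
    · -- B1 leaf: d2 ≤ 0 (so d3 ≤ 0)
      exact transfer_lemma _ _ _ _ _ _ _ _ _ _ _ _ ((8/27-P1)/2) 0 0
        (2*(8/27-P2)) 0 (2*(8/27-P3)) 0 hx1 hx2 hx3 hB1 hB2 hB3
        (by linarith) le_rfl le_rfl (by linarith) le_rfl (by linarith) le_rfl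
        hB1x2 hB1x3 hB1x1 hB2x1 hB2x3 hB3x1 hB3x2
        (by linarith) (by linarith) (by linarith) (by linarith) (by linarith) (by linarith)
    · rcases le_or_gt (P1+P2-8/27) 0 with hd3 | hd3
      · rcases le_or_gt (P1+P3-8/27) (2*(8/27-P1)) with hB2c | hC
        · -- B2b leaf
          exact transfer_lemma _ _ _ _ _ _ _ _ _ _ _ _
            ((2*(8/27-P1)-(P1+P3-8/27))/4) (P1+P3-8/27) 0
            (2*(8/27-P2)) 0 (2*(8/27-P3)) 0 hx1 hx2 hx3 hB1 hB2 hB3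
            (by linarith) (by linarith) le_rfl (by linarith) le_rfl (by linarith) le_rfl
            hB1x2 hB1x3 hB1x1 hB2x1 hB2x3 hB3x1 hB3x2
            (by linarith) (by linarith) (by linarith) (by linarith) (by linarith) (by linarith)
        · -- case C with d3 ≤ 0
          have hK1 : P2+P3-8/27 ≤ 2*(8/27-P2) + 2*(8/27-P3) := by linarith
          rcases le_or_gt (P2+P3-8/27) (2*(8/27-P2)) with hCI | hCII
          · rcases le_or_gt (2*(8/27-P3)) (P1+P3-8/27) with hm | hm
            · exact transfer_lemma _ _ _ _ _ _ _ _ _ _ _ _ 0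
                ((P1+P3-8/27)-2*(8/27-P3)) 0 (P2+P3-8/27) 0 0 (2*(8/27-P3))
                hx1 hx2 hx3 hB1 hB2 hB3
                le_rfl (by linarith) le_rfl (by linarith) le_rfl le_rfl (by linarith)
                hB1x2 hB1x3 hB1x1 hB2x1 hB2x3 hB3x1 hB3x2
                (by linarith) (by linarith) (by linarith) (by linarith) (by linarith) (by linarith)
            · exact transfer_lemma _ _ _ _ _ _ _ _ _ _ _ _ 0 0 0
                (P2+P3-8/27) 0 0 (P1+P3-8/27)
                hx1 hx2 hx3 hB1 hB2 hB3
                le_rfl le_rfl le_rfl (by linarith) le_rfl le_rfl (by linarith)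
                hB1x2 hB1x3 hB1x1 hB2x1 hB2x3 hB3x1 hB3x2
                (by linarith) (by linarith) (by linarith) (by linarith) (by linarith) (by linarith)
          · rcases le_or_gt (2*(8/27-P3) - ((P2+P3-8/27) - 2*(8/27-P2))) (P1+P3-8/27) with hm | hm
            · exact transfer_lemma _ _ _ _ _ _ _ _ _ _ _ _ 0
                ((P1+P3-8/27) - (2*(8/27-P3) - ((P2+P3-8/27) - 2*(8/27-P2)))) 0
                (2*(8/27-P2)) 0 ((P2+P3-8/27) - 2*(8/27-P2))
                (2*(8/27-P3) - ((P2+P3-8/27) - 2*(8/27-P2)))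
                hx1 hx2 hx3 hB1 hB2 hB3
                le_rfl (by linarith) le_rfl (by linarith) le_rfl (by linarith) (by linarith)
                hB1x2 hB1x3 hB1x1 hB2x1 hB2x3 hB3x1 hB3x2
                (by linarith) (by linarith) (by linarith) (by linarith) (by linarith) (by linarith)
            · exact transfer_lemma _ _ _ _ _ _ _ _ _ _ _ _ 0 0 0
                (2*(8/27-P2)) 0 ((P2+P3-8/27) - 2*(8/27-P2)) (P1+P3-8/27)
                hx1 hx2 hx3 hB1 hB2 hB3
                le_rfl le_rfl le_rfl (by linarith) le_rfl (by linarith) (by linarith)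
                hB1x2 hB1x3 hB1x1 hB2x1 hB2x3 hB3x1 hB3x2
                (by linarith) (by linarith) (by linarith) (by linarith) (by linarith) (by linarith)
      · -- d3 > 0
        rcases le_or_gt ((P1+P3-8/27)+(P1+P2-8/27)) (2*(8/27-P1)) with hB3c | hC
        · -- B3 leaf
          have hb3 := hB3leaf hreg
          exact transfer_lemma _ _ _ _ _ _ _ _ _ _ _ _
            ((2*(8/27-P1)-(P1+P3-8/27)-(P1+P2-8/27))/4) (P1+P3-8/27) (P1+P2-8/27)
            (2*(8/27-P2)) 0 (2*(8/27-P3)) 0 hx1 hx2 hx3 hB1 hB2 hB3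
            (by linarith) (by linarith) (by linarith) (by linarith) le_rfl (by linarith) le_rfl
            hB1x2 hB1x3 hB1x1 hB2x1 hB2x3 hB3x1 hB3x2
            (by linarith) (by linarith) (by linarith) (by linarith) (by linarith) (by linarith)
        · -- case C' with d3 > 0
          have hK1 : P2+P3-8/27 ≤ 2*(8/27-P2) + 2*(8/27-P3) := by linarith
          rcases le_or_gt (P2+P3-8/27) (2*(8/27-P2)) with hCI | hCII
          · rcases le_or_gt (2*(8/27-P3)) (P1+P3-8/27) with hm | hm
            · rcases le_or_gt (2*(8/27-P2) - (P2+P3-8/27)) (P1+P2-8/27) with hn | hn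
              · exact transfer_lemma _ _ _ _ _ _ _ _ _ _ _ _ 0
                  ((P1+P3-8/27)-2*(8/27-P3)) ((P1+P2-8/27)-(2*(8/27-P2)-(P2+P3-8/27)))
                  (P2+P3-8/27) (2*(8/27-P2)-(P2+P3-8/27)) 0 (2*(8/27-P3))
                  hx1 hx2 hx3 hB1 hB2 hB3
                  le_rfl (by linarith) (by linarith) (by linarith) (by linarith) le_rfl (by linarith)
                  hB1x2 hB1x3 hB1x1 hB2x1 hB2x3 hB3x1 hB3x2
                  (by linarith) (by linarith) (by linarith) (by linarith) (by linarith) (by linarith)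
              · exact transfer_lemma _ _ _ _ _ _ _ _ _ _ _ _ 0
                  ((P1+P3-8/27)-2*(8/27-P3)) 0
                  (P2+P3-8/27) (P1+P2-8/27) 0 (2*(8/27-P3))
                  hx1 hx2 hx3 hB1 hB2 hB3
                  le_rfl (by linarith) le_rfl (by linarith) (by linarith) le_rfl (by linarith)
                  hB1x2 hB1x3 hB1x1 hB2x1 hB2x3 hB3x1 hB3x2
                  (by linarith) (by linarith) (by linarith) (by linarith) (by linarith) (by linarith)
            · rcases le_or_gt (2*(8/27-P2) - (P2+P3-8/27)) (P1+P2-8/27) with hn | hn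
              · exact transfer_lemma _ _ _ _ _ _ _ _ _ _ _ _ 0 0
                  ((P1+P2-8/27)-(2*(8/27-P2)-(P2+P3-8/27)))
                  (P2+P3-8/27) (2*(8/27-P2)-(P2+P3-8/27)) 0 (P1+P3-8/27)
                  hx1 hx2 hx3 hB1 hB2 hB3
                  le_rfl le_rfl (by linarith) (by linarith) (by linarith) le_rfl (by linarith)
                  hB1x2 hB1x3 hB1x1 hB2x1 hB2x3 hB3x1 hB3x2
                  (by linarith) (by linarith) (by linarith) (by linarith) (by linarith) (by linarith)
              · exact transfer_lemma _ _ _ _ _ _ _ _ _ _ _ _ 0 0 0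
                  (P2+P3-8/27) (P1+P2-8/27) 0 (P1+P3-8/27)
                  hx1 hx2 hx3 hB1 hB2 hB3
                  le_rfl le_rfl le_rfl (by linarith) (by linarith) le_rfl (by linarith)
                  hB1x2 hB1x3 hB1x1 hB2x1 hB2x3 hB3x1 hB3x2
                  (by linarith) (by linarith) (by linarith) (by linarith) (by linarith) (by linarith)
          · rcases le_or_gt (2*(8/27-P3) - ((P2+P3-8/27) - 2*(8/27-P2))) (P1+P3-8/27) with hm | hm
            · exact transfer_lemma _ _ _ _ _ _ _ _ _ _ _ _ 0
                ((P1+P3-8/27) - (2*(8/27-P3) - ((P2+P3-8/27) - 2*(8/27-P2)))) (P1+P2-8/27)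
                (2*(8/27-P2)) 0 ((P2+P3-8/27) - 2*(8/27-P2))
                (2*(8/27-P3) - ((P2+P3-8/27) - 2*(8/27-P2)))
                hx1 hx2 hx3 hB1 hB2 hB3
                le_rfl (by linarith) (by linarith) (by linarith) le_rfl (by linarith) (by linarith)
                hB1x2 hB1x3 hB1x1 hB2x1 hB2x3 hB3x1 hB3x2
                (by linarith) (by linarith) (by linarith) (by linarith) (by linarith) (by linarith)
            · have hd3cap : P1+P2-8/27 ≤ 2*(8/27-P1) := by linarith
              exact transfer_lemma _ _ _ _ _ _ _ _ _ _ _ _ 0 0 (P1+P2-8/27)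
                (2*(8/27-P2)) 0 ((P2+P3-8/27) - 2*(8/27-P2)) (P1+P3-8/27)
                hx1 hx2 hx3 hB1 hB2 hB3
                le_rfl le_rfl (by linarith) (by linarith) le_rfl (by linarith) (by linarith)
                hB1x2 hB1x3 hB1x1 hB2x1 hB2x3 hB3x1 hB3x2
                (by linarith) (by linarith) (by linarith) (by linarith) (by linarith) (by linarith)

lemma claim_lemma (x1 x2 x3 a1 a2 a3 b12 b13 b23 c q1 q2 q3 : ℝ)
    (hx1 : 0 ≤ x1) (hx2 : 0 ≤ x2) (hx3 : 0 ≤ x3)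
    (ha1 : 0 ≤ a1) (ha2 : 0 ≤ a2) (ha3 : 0 ≤ a3) (hc : 0 ≤ c)
    (hsum : x1 + x2 + x3 + a1 + a2 + a3 + b12 + b13 + b23 + c = 1)
    (h23 : b23 ≥ max (max (2 * x2) (2 * x3)) (x1 / 2))
    (h13 : b13 ≥ max (max (2 * x1) (2 * x3)) (x2 / 2))
    (h12 : b12 ≥ max (max (2 * x1) (2 * x2)) (x3 / 2))
    (hq10 : 0 ≤ q1) (hq11 : q1 ≤ 1) (hq20 : 0 ≤ q2) (hq21 : q2 ≤ 1)
    (hq30 : 0 ≤ q3) (hq31 : q3 ≤ 1) (hqs : q1 + q2 + q3 = 2) :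
    (1-q1)*(q1*(b23+x2+x3) + q1^2*(a2+a3) + q1^3*c)
    + (1-q2)*(q2*(b13+x1+x3) + q2^2*(a1+a3) + q2^3*c)
    + (1-q3)*(q3*(b12+x1+x2) + q3^2*(a1+a2) + q3^3*c) ≤ 8/27 := by
  obtain ⟨⟨hcr12', hcr13⟩, hown1'⟩ :
      (2*x2 ≤ b23 ∧ 2*x3 ≤ b23) ∧ x1/2 ≤ b23 := by
    constructor
    · exact max_le_iff.mp (le_trans (le_max_left _ _) h23)
    · exact le_trans (le_max_right _ _) h23
  obtain ⟨⟨hcr21', hcr23⟩, hown2'⟩ :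
      (2*x1 ≤ b13 ∧ 2*x3 ≤ b13) ∧ x2/2 ≤ b13 := by
    constructor
    · exact max_le_iff.mp (le_trans (le_max_left _ _) h13)
    · exact le_trans (le_max_right _ _) h13
  obtain ⟨⟨hcr31', hcr32⟩, hown3'⟩ :
      (2*x1 ≤ b12 ∧ 2*x2 ≤ b12) ∧ x3/2 ≤ b12 := by
    constructor
    · exact max_le_iff.mp (le_trans (le_max_left _ _) h12)
    · exact le_trans (le_max_right _ _) h12
  have hcr12 : 2*x2 ≤ b23 := hcr12'
  have hcr21 : 2*x1 ≤ b13 := hcr21'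
  have hcr31 : 2*x1 ≤ b12 := hcr31'
  have hown1 : x1 ≤ 2*b23 := by linarith
  have hown2 : x2 ≤ 2*b13 := by linarith
  have hown3 : x3 ≤ 2*b12 := by linarith
  have key : ((q2-q2^2)+(q3-q3^2)-8/27)*x1 + ((q1-q1^2)+(q3-q3^2)-8/27)*x2
      + ((q1-q1^2)+(q2-q2^2)-8/27)*x3
      ≤ (8/27-(q1-q1^2))*b23 + (8/27-(q2-q2^2))*b13 + (8/27-(q3-q3^2))*b12 := by
    rcases le_total (q1-q1^2) (q2-q2^2) with hs12 | hs12
    · rcases le_total (q2-q2^2) (q3-q3^2) with hs23 | hs23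
      · have H := xb_abstract (q1-q1^2) (q2-q2^2) (q3-q3^2) x1 x2 x3 b23 b13 b12
          (pnonneg q1 hq10 hq11) (by linarith) (by linarith) (ponequarter q3) (by linarith [psum q1 q2 q3 hqs]) (leafB3 q1 q2 q3 hq10 hq11 hq20 hq21 hq30 hq31 (by linarith)) hx1 hx2 hx3 hcr12 hcr13 hown1 hcr21 hcr23 hown2 hcr31 hcr32 hown3
        linarith [H]
      · rcases le_total (q1-q1^2) (q3-q3^2) with hs13 | hs13
        · have H := xb_abstract (q1-q1^2) (q3-q3^2) (q2-q2^2) x1 x3 x2 b23 b12 b13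
            (pnonneg q1 hq10 hq11) (by linarith) (by linarith) (ponequarter q2) (by linarith [psum q1 q2 q3 hqs]) (leafB3 q1 q3 q2 hq10 hq11 hq30 hq31 hq20 hq21 (by linarith)) hx1 hx3 hx2 hcr13 hcr12 hown1 hcr31 hcr32 hown3 hcr21 hcr23 hown2
          linarith [H]
        · have H := xb_abstract (q3-q3^2) (q1-q1^2) (q2-q2^2) x3 x1 x2 b12 b23 b13
            (pnonneg q3 hq30 hq31) (by linarith) (by linarith) (ponequarter q2) (by linarith [psum q1 q2 q3 hqs]) (leafB3 q3 q1 q2 hq30 hq31 hq10 hq11 hq20 hq21 (by linarith)) hx3 hx1 hx2 hcr31 hcr32 hown3 hcr13 hcr12 hown1 hcr23 hcr21 hown2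
          linarith [H]
    · rcases le_total (q1-q1^2) (q3-q3^2) with hs13 | hs13
      · have H := xb_abstract (q2-q2^2) (q1-q1^2) (q3-q3^2) x2 x1 x3 b13 b23 b12
          (pnonneg q2 hq20 hq21) (by linarith) (by linarith) (ponequarter q3) (by linarith [psum q1 q2 q3 hqs]) (leafB3 q2 q1 q3 hq20 hq21 hq10 hq11 hq30 hq31 (by linarith)) hx2 hx1 hx3 hcr21 hcr23 hown2 hcr12 hcr13 hown1 hcr32 hcr31 hown3
        linarith [H]
      · rcases le_total (q2-q2^2) (q3-q3^2) with hs23 | hs23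
        · have H := xb_abstract (q2-q2^2) (q3-q3^2) (q1-q1^2) x2 x3 x1 b13 b12 b23
            (pnonneg q2 hq20 hq21) (by linarith) (by linarith) (ponequarter q1) (by linarith [psum q1 q2 q3 hqs]) (leafB3 q2 q3 q1 hq20 hq21 hq30 hq31 hq10 hq11 (by linarith)) hx2 hx3 hx1 hcr23 hcr21 hown2 hcr32 hcr31 hown3 hcr12 hcr13 hown1
          linarith [H]
        · have H := xb_abstract (q3-q3^2) (q2-q2^2) (q1-q1^2) x3 x2 x1 b12 b13 b23
            (pnonneg q3 hq30 hq31) (by linarith) (by linarith) (ponequarter q1) (by linarith [psum q1 q2 q3 hqs]) (leafB3 q3 q2 q1 hq30 hq31 hq20 hq21 hq10 hq11 (by linarith)) hx3 hx2 hx1 hcr32 hcr31 hown3 hcr23 hcr21 hown2 hcr13 hcr12 hown1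
          linarith [H]
  have ha1c : (1-q2)*q2^2 + (1-q3)*q3^2 ≤ 8/27 := by
    linarith [rle q2 hq20 hq21, rle q3 hq30 hq31]
  have ha2c : (1-q1)*q1^2 + (1-q3)*q3^2 ≤ 8/27 := by
    linarith [rle q1 hq10 hq11, rle q3 hq30 hq31]
  have ha3c : (1-q1)*q1^2 + (1-q2)*q2^2 ≤ 8/27 := by
    linarith [rle q1 hq10 hq11, rle q2 hq20 hq21]
  have hcc := cubesum q1 q2 q3 hq10 hq11 hq20 hq21 hq30 hq31 hqs
  nlinarith [key, mul_le_mul_of_nonneg_left ha1c ha1, mul_le_mul_of_nonneg_left ha2c ha2,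
    mul_le_mul_of_nonneg_left ha3c ha3, mul_le_mul_of_nonneg_left hcc hc]

lemma sup_sum_ge (x1 x2 x3 a1 a2 a3 b12 b13 b23 c : ℝ)
    (hx1 : 0 ≤ x1) (hx2 : 0 ≤ x2) (hx3 : 0 ≤ x3)
    (ha1 : 0 ≤ a1) (ha2 : 0 ≤ a2) (ha3 : 0 ≤ a3)
    (hc : 0 ≤ c)
    (hsum : x1 + x2 + x3 + a1 + a2 + a3 + b12 + b13 + b23 + c = 1)
    (h23 : b23 ≥ max (max (2 * x2) (2 * x3)) (x1 / 2))
    (h13 : b13 ≥ max (max (2 * x1) (2 * x3)) (x2 / 2))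
    (h12 : b12 ≥ max (max (2 * x1) (2 * x2)) (x3 / 2))
    (s1 s2 s3 : ℝ)
    (hs10 : 0 ≤ s1) (hs11 : s1 ≤ 1) (hs20 : 0 ≤ s2) (hs21 : s2 ≤ 1)
    (hs30 : 0 ≤ s3) (hs31 : s3 ≤ 1)
    (hs1f : s1*(b23+x2+x3) + s1^2*(a2+a3) + s1^3*c ≤ 8/27)
    (hs1m : ∀ u, u ∈ Set.Icc (0:ℝ) 1 → s1 < u → 8/27 < u*(b23+x2+x3) + u^2*(a2+a3) + u^3*c)
    (hs2m : ∀ u, u ∈ Set.Icc (0:ℝ) 1 → s2 < u → 8/27 < u*(b13+x1+x3) + u^2*(a1+a3) + u^3*c)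
    (hs3m : ∀ u, u ∈ Set.Icc (0:ℝ) 1 → s3 < u → 8/27 < u*(b12+x1+x2) + u^2*(a1+a2) + u^3*c) :
    2 ≤ s1 + s2 + s3 := by
    by_contra hcon
    push_neg at hcon
    obtain ⟨t, ht0, ht1, htm⟩ : ∃ t : ℝ, 0 < t ∧ t ≤ 1 ∧
        t*(3-(s1+s2+s3)) = 2-(s1+s2+s3) := by
      have hden : (0:ℝ) < 3 - (s1+s2+s3) := by linarith
      refine ⟨(2-(s1+s2+s3))/(3-(s1+s2+s3)), div_pos (by linarith) hden, ?_, ?_⟩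
      · rw [div_le_one hden]; linarith
      · exact div_mul_cancel₀ _ (ne_of_gt hden)
    set u1 : ℝ := s1 + t*(1-s1) with hu1def
    set u2 : ℝ := s2 + t*(1-s2) with hu2def
    set u3 : ℝ := s3 + t*(1-s3) with hu3def
    have hm1 : 0 ≤ t*(1-s1) := mul_nonneg ht0.le (by linarith)
    have hm2 : 0 ≤ t*(1-s2) := mul_nonneg ht0.le (by linarith)
    have hm3 : 0 ≤ t*(1-s3) := mul_nonneg ht0.le (by linarith)
    have hn1 : 0 ≤ (1-t)*(1-s1) := mul_nonneg (by linarith) (by linarith)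
    have hn2 : 0 ≤ (1-t)*(1-s2) := mul_nonneg (by linarith) (by linarith)
    have hn3 : 0 ≤ (1-t)*(1-s3) := mul_nonneg (by linarith) (by linarith)
    have hu10 : 0 ≤ u1 := by rw [hu1def]; linarith
    have hu11 : u1 ≤ 1 := by rw [hu1def]; nlinarith [hn1]
    have hu20 : 0 ≤ u2 := by rw [hu2def]; linarith
    have hu21 : u2 ≤ 1 := by rw [hu2def]; nlinarith [hn2]
    have hu30 : 0 ≤ u3 := by rw [hu3def]; linarith
    have hu31 : u3 ≤ 1 := by rw [hu3def]; nlinarith [hn3]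
    have husum : u1 + u2 + u3 = 2 := by
      rw [hu1def, hu2def, hu3def]
      have h : s1 + t*(1-s1) + (s2 + t*(1-s2)) + (s3 + t*(1-s3))
          = (s1+s2+s3) + t*(3-(s1+s2+s3)) := by ring
      rw [h, htm]; ring
    have hgt1 : u1 < 1 → s1 < u1 := by
      intro hl
      have h1s : 0 < 1 - s1 := by
        rcases lt_or_ge s1 1 with h | h
        · linarith
        · exfalso
          have hs1e : s1 = 1 := le_antisymm hs11 h
          rw [hu1def, hs1e] at hl; norm_num at hl
      have := mul_pos ht0 h1s
      rw [hu1def]; linarith [this]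
    have hgt2 : u2 < 1 → s2 < u2 := by
      intro hl
      have h1s : 0 < 1 - s2 := by
        rcases lt_or_ge s2 1 with h | h
        · linarith
        · exfalso
          have hs2e : s2 = 1 := le_antisymm hs21 h
          rw [hu2def, hs2e] at hl; norm_num at hl
      have := mul_pos ht0 h1s
      rw [hu2def]; linarith [this]
    have hgt3 : u3 < 1 → s3 < u3 := by
      intro hl
      have h1s : 0 < 1 - s3 := by
        rcases lt_or_ge s3 1 with h | h
        · linarith
        · exfalso
          have hs3e : s3 = 1 := le_antisymm hs31 h
          rw [hu3def, hs3e] at hl; norm_num at hl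
      have := mul_pos ht0 h1s
      rw [hu3def]; linarith [this]
    have hclaim := claim_lemma x1 x2 x3 a1 a2 a3 b12 b13 b23 c u1 u2 u3
      hx1 hx2 hx3 ha1 ha2 ha3 hc hsum h23 h13 h12
      hu10 hu11 hu20 hu21 hu30 hu31 husum
    have hw1 : (1-u1)*(8/27) ≤ (1-u1)*(u1*(b23+x2+x3) + u1^2*(a2+a3) + u1^3*c) := by
      rcases eq_or_lt_of_le hu11 with he | hl
      · rw [he]; norm_num
      · exact mul_le_mul_of_nonneg_left (hs1m u1 ⟨hu10, hu11⟩ (hgt1 hl)).le (by linarith)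
    have hw2 : (1-u2)*(8/27) ≤ (1-u2)*(u2*(b13+x1+x3) + u2^2*(a1+a3) + u2^3*c) := by
      rcases eq_or_lt_of_le hu21 with he | hl
      · rw [he]; norm_num
      · exact mul_le_mul_of_nonneg_left (hs2m u2 ⟨hu20, hu21⟩ (hgt2 hl)).le (by linarith)
    have hw3 : (1-u3)*(8/27) ≤ (1-u3)*(u3*(b12+x1+x2) + u3^2*(a1+a2) + u3^3*c) := by
      rcases eq_or_lt_of_le hu31 with he | hl
      · rw [he]; norm_num
      · exact mul_le_mul_of_nonneg_left (hs3m u3 ⟨hu30, hu31⟩ (hgt3 hl)).le (by linarith)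
    have hne : u1 < 1 ∨ u2 < 1 ∨ u3 < 1 := by
      by_contra hh
      push_neg at hh
      linarith [hh.1, hh.2.1, hh.2.2]
    rcases hne with h | h | h
    · have hstr := mul_lt_mul_of_pos_left (hs1m u1 ⟨hu10, hu11⟩ (hgt1 h)) (by linarith : (0:ℝ) < 1 - u1)
      linarith
    · have hstr := mul_lt_mul_of_pos_left (hs2m u2 ⟨hu20, hu21⟩ (hgt2 h)) (by linarith : (0:ℝ) < 1 - u2)
      linarith
    · have hstr := mul_lt_mul_of_pos_left (hs3m u3 ⟨hu30, hu31⟩ (hgt3 h)) (by linarith : (0:ℝ) < 1 - u3)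
      linarith

/-- The technical lemma: under the constraints on the non-negative variables,
there exist `q1, q2, q3 ∈ [0,1]` summing to `2` satisfying the three inequalities. -/
theorem stmt_1 (x1 x2 x3 a1 a2 a3 b12 b13 b23 c : ℝ)
    (hx1 : 0 ≤ x1) (hx2 : 0 ≤ x2) (hx3 : 0 ≤ x3)
    (ha1 : 0 ≤ a1) (ha2 : 0 ≤ a2) (ha3 : 0 ≤ a3)
    (hb12 : 0 ≤ b12) (hb13 : 0 ≤ b13) (hb23 : 0 ≤ b23) (hc : 0 ≤ c)
    (hsum : x1 + x2 + x3 + a1 + a2 + a3 + b12 + b13 + b23 + c = 1)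
    (h23 : b23 ≥ max (max (2 * x2) (2 * x3)) (x1 / 2))
    (h13 : b13 ≥ max (max (2 * x1) (2 * x3)) (x2 / 2))
    (h12 : b12 ≥ max (max (2 * x1) (2 * x2)) (x3 / 2)) :
    ∃ q1 q2 q3 : ℝ, q1 ∈ Set.Icc (0:ℝ) 1 ∧ q2 ∈ Set.Icc (0:ℝ) 1 ∧ q3 ∈ Set.Icc (0:ℝ) 1 ∧
      q1 + q2 + q3 = 2 ∧
      q1 * (b23 + x2 + x3) + q1 ^ 2 * (a2 + a3) + q1 ^ 3 * c ≤ 8 / 27 ∧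
      q2 * (b13 + x1 + x3) + q2 ^ 2 * (a1 + a3) + q2 ^ 3 * c ≤ 8 / 27 ∧
      q3 * (b12 + x1 + x2) + q3 ^ 2 * (a1 + a2) + q3 ^ 3 * c ≤ 8 / 27 := by
  obtain ⟨s1, hs1I, hs1f, hs1m⟩ := exists_sup (b23+x2+x3) (a2+a3) c
  obtain ⟨s2, hs2I, hs2f, hs2m⟩ := exists_sup (b13+x1+x3) (a1+a3) c
  obtain ⟨s3, hs3I, hs3f, hs3m⟩ := exists_sup (b12+x1+x2) (a1+a2) c
  obtain ⟨hs10, hs11⟩ := hs1I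
  obtain ⟨hs20, hs21⟩ := hs2I
  obtain ⟨hs30, hs31⟩ := hs3I
  have hsum2 : 2 ≤ s1 + s2 + s3 :=
    sup_sum_ge x1 x2 x3 a1 a2 a3 b12 b13 b23 c hx1 hx2 hx3 ha1 ha2 ha3 hc hsum
      h23 h13 h12 s1 s2 s3 hs10 hs11 hs20 hs21 hs30 hs31 hs1f hs1m hs2m hs3m
  -- construct the actual q's
  set q1 : ℝ := max 0 (2 - s2 - s3) with hq1def
  have hq10 : 0 ≤ q1 := le_max_left _ _
  have hq1s1 : q1 ≤ s1 := max_le hs10 (by linarith)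
  have hq11 : q1 ≤ 1 := hq1s1.trans hs11
  set q2 : ℝ := min s2 (2 - q1) with hq2def
  have hq2s2 : q2 ≤ s2 := min_le_left _ _
  have hq20 : 0 ≤ q2 := le_min hs20 (by linarith)
  have hq21 : q2 ≤ 1 := hq2s2.trans hs21
  set q3 : ℝ := 2 - q1 - q2 with hq3def
  have hq30 : 0 ≤ q3 := by
    have := min_le_right s2 (2 - q1)
    rw [hq3def]; rw [hq2def]; linarith [min_le_right s2 (2-q1)]
  have hq3s3 : q3 ≤ s3 := by
    rcases le_total s2 (2 - q1) with hcase | hcase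
    · have : q2 = s2 := by rw [hq2def, min_eq_left hcase]
      rw [hq3def, this]
      have := le_max_right (0:ℝ) (2 - s2 - s3)
      linarith [le_max_right (0:ℝ) (2 - s2 - s3)]
    · have : q2 = 2 - q1 := by rw [hq2def, min_eq_right hcase]
      rw [hq3def, this]; linarith
  have hq31 : q3 ≤ 1 := hq3s3.trans hs31
  refine ⟨q1, q2, q3, ⟨hq10, hq11⟩, ⟨hq20, hq21⟩, ⟨hq30, hq31⟩, by rw [hq3def]; ring,
    ?_, ?_, ?_⟩
  · have hm := fmono (b23+x2+x3) (a2+a3) c q1 s1 (by linarith) (by linarith) hc hq10 hq1s1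
    calc q1 * (b23+x2+x3) + q1^2*(a2+a3) + q1^3*c
        ≤ s1 * (b23+x2+x3) + s1^2*(a2+a3) + s1^3*c := hm
      _ ≤ 8/27 := hs1f
  · have hm := fmono (b13+x1+x3) (a1+a3) c q2 s2 (by linarith) (by linarith) hc hq20 hq2s2
    calc q2 * (b13+x1+x3) + q2^2*(a1+a3) + q2^3*c
        ≤ s2 * (b13+x1+x3) + s2^2*(a1+a3) + s2^3*c := hm
      _ ≤ 8/27 := hs2f
  · have hm := fmono (b12+x1+x2) (a1+a2) c q3 s3 (by linarith) (by linarith) hc hq30 hq3s3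
    calc q3 * (b12+x1+x2) + q3^2*(a1+a2) + q3^3*c
        ≤ s3 * (b12+x1+x2) + s3^2*(a1+a2) + s3^3*c := hm
      _ ≤ 8/27 := hs3f
end

section
/- There do not exist real numbers q2, q3 ∈ [0,1] with q2 + q3 = 1 and non-negative real numbers x1, x2, x3, a1, a2, a3, b12, b13, b23, c with x1 + x2 + x3 + a1 + a2 + a3 + b12 + b13 + b23 + c = 1, satisfying b23 ≥ max(2x2, 2x3, x1/2), b13 ≥ max(2x1, 2x3, x2/2), b12 ≥ max(2x1, 2x2, x3/2), such that both q2·(b13 + x1 + x3) + q2²·(a1 + a3) + q2³·c > 8/27 and q3·(b12 + x1 + x2) + q3²·(a1 + a2) + q3³·c > 8/27. -/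
set_option maxHeartbeats 1600000

/-- Nonexistence of solutions to System2. -/
theorem stmt_2 :
    ¬ ∃ (q2 q3 x1 x2 x3 a1 a2 a3 b12 b13 b23 c : ℝ),
      q2 ∈ Set.Icc (0:ℝ) 1 ∧ q3 ∈ Set.Icc (0:ℝ) 1 ∧ q2 + q3 = 1 ∧
      0 ≤ x1 ∧ 0 ≤ x2 ∧ 0 ≤ x3 ∧ 0 ≤ a1 ∧ 0 ≤ a2 ∧ 0 ≤ a3 ∧
      0 ≤ b12 ∧ 0 ≤ b13 ∧ 0 ≤ b23 ∧ 0 ≤ c ∧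
      x1 + x2 + x3 + a1 + a2 + a3 + b12 + b13 + b23 + c = 1 ∧
      b23 ≥ max (max (2 * x2) (2 * x3)) (x1 / 2) ∧
      b13 ≥ max (max (2 * x1) (2 * x3)) (x2 / 2) ∧
      b12 ≥ max (max (2 * x1) (2 * x2)) (x3 / 2) ∧
      q2 * (b13 + x1 + x3) + q2 ^ 2 * (a1 + a3) + q2 ^ 3 * c > 8 / 27 ∧
      q3 * (b12 + x1 + x2) + q3 ^ 2 * (a1 + a2) + q3 ^ 3 * c > 8 / 27 := by
  rintro ⟨q2, q3, x1, x2, x3, a1, a2, a3, b12, b13, b23, c,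
    ⟨hq2l, hq2u⟩, ⟨hq3l, hq3u⟩, hq, hx1, hx2, hx3, ha1, ha2, ha3,
    hb12, hb13, hb23, hc, hsum, hB23, hB13, hB12, h2, h3⟩
  simp only [ge_iff_le, max_le_iff] at hB23 hB13 hB12
  obtain ⟨⟨hB23a, hB23b⟩, hB23c⟩ := hB23
  obtain ⟨⟨hB13a, hB13b⟩, hB13c⟩ := hB13
  obtain ⟨⟨hB12a, hB12b⟩, hB12c⟩ := hB12
  -- q2 = 0 is immediately contradictory
  rcases eq_or_lt_of_le hq2l with h0 | hq2pos
  · rw [← h0] at h2; norm_num at h2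
  have hqq : q2 * q3 ≤ 1/4 := by nlinarith [sq_nonneg (q2 - q3)]
  have hqq0 : 0 ≤ q2 * q3 := mul_nonneg hq2l hq3l
  -- K = (8/27)(q3² + q2²)
  have hKnn : (0:ℝ) ≤ 8/27 * (q3^2 + q2^2) := by positivity
  have Hmu4 : (0:ℝ) ≤ 8/27 * (q3^2 + q2^2) - q3^2 * q2 := by
    nlinarith [sq_nonneg (3*q2 - 1), sq_nonneg (3*q3 - 2), mul_nonneg hq2l hq3l,
      mul_nonneg (mul_nonneg hq2l hq2l) hq3l, sq_nonneg (q2 - q3)]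
  have Hmu7 : (0:ℝ) ≤ 8/27 * (q3^2 + q2^2) - q2^2 * q3 := by
    nlinarith [sq_nonneg (3*q3 - 1), sq_nonneg (3*q2 - 2), mul_nonneg hq2l hq3l,
      mul_nonneg (mul_nonneg hq3l hq3l) hq2l, sq_nonneg (q2 - q3)]
  have Hx1 : (0:ℝ) ≤ 11/2 * (8/27 * (q3^2 + q2^2)) - 3 * (q2 * q3) * (q2 + q3) := by
    rw [hq]; nlinarith [sq_nonneg (q2 - q3)]
  have Ha1 : (0:ℝ) ≤ 8/27 * (q3^2 + q2^2) - 2 * (q2^2 * q3^2) := by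
    nlinarith [sq_nonneg (q2 - q3), sq_nonneg (q2*q3)]
  have Ha2 : (0:ℝ) ≤ 8/27 * (q3^2 + q2^2) - q2^2 * q3^2 := by
    nlinarith [sq_nonneg (q2 - q3), sq_nonneg (q2*q3)]
  have Hc : (0:ℝ) ≤ 8/27 * (q3^2 + q2^2) - (q3^2 * q2^3 + q2^2 * q3^3) := by
    have : q3^2 * q2^3 + q2^2 * q3^3 = (q2*q3)^2 * (q2 + q3) := by ring
    rw [this, hq]; nlinarith [sq_nonneg (q2 - q3), sq_nonneg (q2*q3)]
  -- products
  have hcb23 : (0:ℝ) ≤ b23 - x1/2 := by linarith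
  have hcb13 : (0:ℝ) ≤ b13 - 2*x1 := by linarith
  have hcb12 : (0:ℝ) ≤ b12 - 2*x1 := by linarith
  have P1 := mul_nonneg hKnn hcb23
  have P2 := mul_nonneg Hmu4 hcb13
  have P3 := mul_nonneg Hmu7 hcb12
  have P4 := mul_nonneg Hx1 hx1
  have P5 := mul_nonneg Hmu7 hx2
  have P6 := mul_nonneg Hmu4 hx3
  have P7 := mul_nonneg Ha1 ha1
  have P8 := mul_nonneg Ha2 ha2
  have P9 := mul_nonneg Ha2 ha3
  have P10 := mul_nonneg Hc hc
  have H2' := mul_le_mul_of_nonneg_left h2.le (sq_nonneg q3)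
  have H3' := (mul_lt_mul_iff_right₀ (pow_pos hq2pos 2)).2 h3
  have hKsum : 8/27 * (q3^2 + q2^2) *
      (x1 + x2 + x3 + a1 + a2 + a3 + b12 + b13 + b23 + c)
      = 8/27 * (q3^2 + q2^2) := by rw [hsum]; ring
  linarith [P1, P2, P3, P4, P5, P6, P7, P8, P9, P10, H2', H3', hKsum]
end

section
/- Let x1, b12, b13 be real numbers with b12 ≥ 2·x1, b13 ≥ 2·x1, x1 ≥ 0, b12 + b13 + (3/2)·x1 = 1, and b13 + x1 > 0 and b12 + x1 > 0. Then (8/27)·(1/(b13 + x1) + 1/(b12 + x1)) ≥ 88/81. -/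
/-- The reduced inequality resolving System2. -/
theorem stmt_3 (x1 b12 b13 : ℝ)
    (h12 : b12 ≥ 2 * x1) (h13 : b13 ≥ 2 * x1) (hx : 0 ≤ x1)
    (hsum : b12 + b13 + (3 / 2) * x1 = 1)
    (hpos13 : b13 + x1 > 0) (hpos12 : b12 + x1 > 0) :
    (8 / 27) * (1 / (b13 + x1) + 1 / (b12 + x1)) ≥ 88 / 81 := by
  rw [ge_iff_le, div_add_div _ _ (ne_of_gt hpos13) (ne_of_gt hpos12), ← sub_nonneg]
  have h : (8 / 27) * ((1 * (b12 + x1) + (b13 + x1) * 1) / ((b13 + x1) * (b12 + x1))) - 88 / 81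
      = (8/27 * (b12 + b13 + 2*x1) - 88/81 * ((b13 + x1) * (b12 + x1))) / ((b13 + x1) * (b12 + x1)) := by
    field_simp; ring
  rw [h]
  apply div_nonneg _ (le_of_lt (mul_pos hpos13 hpos12))
  nlinarith [sq_nonneg (b12 - b13), mul_nonneg hx (sub_nonneg.2 h12), mul_nonneg hx (sub_nonneg.2 h13), sq_nonneg x1]
end

section
/- Let q1, q2, q3 be non-negative real numbers with q1 + q2 + q3 = 2, and let u1, u2, u3 be positive real numbers with u1 + u2 + u3 ≤ 4/3. Then it is not the case that q1·u1 > 8/27 and q2·u2 > 8/27 and q3·u3 > 8/27. -/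
/-- The AM–HM argument for the sub-cases with `a1 = a2 = a3 = c = 0`. -/
theorem stmt_6 (q1 q2 q3 u1 u2 u3 : ℝ)
    (hq1 : 0 ≤ q1) (hq2 : 0 ≤ q2) (hq3 : 0 ≤ q3) (hq : q1 + q2 + q3 = 2)
    (hu1 : 0 < u1) (hu2 : 0 < u2) (hu3 : 0 < u3) (hu : u1 + u2 + u3 ≤ 4 / 3) :
    ¬ (q1 * u1 > 8 / 27 ∧ q2 * u2 > 8 / 27 ∧ q3 * u3 > 8 / 27) := by
  rintro ⟨h1, h2, h3⟩
  have k1 : 8 / 27 / u1 < q1 := by rw [div_lt_iff₀ hu1]; linarith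
  have k2 : 8 / 27 / u2 < q2 := by rw [div_lt_iff₀ hu2]; linarith
  have k3 : 8 / 27 / u3 < q3 := by rw [div_lt_iff₀ hu3]; linarith
  have hs : 0 < u1 + u2 + u3 := by linarith
  have amhm : 9 / (u1 + u2 + u3) ≤ 1/u1 + 1/u2 + 1/u3 := by
    rw [div_le_iff₀ hs]
    have e : (1/u1 + 1/u2 + 1/u3) * (u1+u2+u3) * (u1*u2*u3) =
        (u2*u3 + u1*u3 + u1*u2) * (u1+u2+u3) := by
      field_simp
    nlinarith [sq_nonneg (u1-u2), sq_nonneg (u1-u3), sq_nonneg (u2-u3),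
      mul_pos hu1 hu2, mul_pos (mul_pos hu1 hu2) hu3, mul_pos hu2 hu3, mul_pos hu1 hu3]
  have h9 : 2 ≤ 9 / (u1 + u2 + u3) * (8/27) := by
    rw [div_mul_eq_mul_div, le_div_iff₀ hs]; linarith
  have : 8/27/u1 + 8/27/u2 + 8/27/u3 = (1/u1+1/u2+1/u3) * (8/27) := by ring
  nlinarith [amhm, h9, k1, k2, k3]
end

section
/- Let q1, q2, q3 ∈ [0,1] with q1 + q2 + q3 = 2, and let a1, a2, a3 be non-negative real numbers with a1 + a2 + a3 = 1. Then it is not the case that q1²·(a2 + a3) > 8/27 and q2²·(a1 + a3) > 8/27 and q3²·(a1 + a2) > 8/27. -/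
lemma aux_stmt7 (q1 q2 q3 : ℝ) (h1a : 0 ≤ q1) (h2a : 0 ≤ q2)
    (h3a : 0 ≤ q3) (h3b : q3 ≤ 1) (hq : q1 + q2 + q3 = 2) :
    27 * (q1^2 * q2^2 * q3^2) ≤ 4 * (q1^2*q2^2 + q2^2*q3^2 + q1^2*q3^2) := by
  have ht0 : 0 ≤ q1*q2*q3 := by positivity
  have hs : 2 - q3 = q1 + q2 := by linarith
  have key : (2-q3)^2*q3 - 4*(q1*q2*q3) = q3*(q1-q2)^2 := by rw [hs]; ring
  have ht : q1*q2*q3 ≤ 8/27 := by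
    nlinarith [key, mul_nonneg h3a (sq_nonneg (q1 - q2)),
      mul_nonneg (sq_nonneg (q3 - 2/3)) (by linarith : (0:ℝ) ≤ 8/3 - q3)]
  have hp : 3*(q1*q2*q3)*(q1+q2+q3) ≤ (q1*q2+q2*q3+q1*q3)^2 := by
    nlinarith [sq_nonneg (q1*q2 - q2*q3), sq_nonneg (q2*q3 - q1*q3), sq_nonneg (q1*q2 - q1*q3)]
  nlinarith [hp, mul_nonneg ht0 (by linarith : (0:ℝ) ≤ 8/27 - q1*q2*q3)]

/-- The Jensen-inequality argument for the sub-cases where only `a1, a2, a3` survive. -/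
theorem stmt_7 (q1 q2 q3 a1 a2 a3 : ℝ)
    (hq1 : q1 ∈ Set.Icc (0:ℝ) 1) (hq2 : q2 ∈ Set.Icc (0:ℝ) 1) (hq3 : q3 ∈ Set.Icc (0:ℝ) 1)
    (hq : q1 + q2 + q3 = 2)
    (ha1 : 0 ≤ a1) (ha2 : 0 ≤ a2) (ha3 : 0 ≤ a3) (ha : a1 + a2 + a3 = 1) :
    ¬ (q1 ^ 2 * (a2 + a3) > 8 / 27 ∧ q2 ^ 2 * (a1 + a3) > 8 / 27 ∧
        q3 ^ 2 * (a1 + a2) > 8 / 27) := by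
  obtain ⟨hq1a, hq1b⟩ := hq1
  obtain ⟨hq2a, hq2b⟩ := hq2
  obtain ⟨hq3a, hq3b⟩ := hq3
  rintro ⟨h1, h2, h3⟩
  -- each q_i^2 is positive since the a-factor is ≤ 1
  have hb1 : a2 + a3 ≤ 1 := by linarith
  have hb2 : a1 + a3 ≤ 1 := by linarith
  have hb3 : a1 + a2 ≤ 1 := by linarith
  have hs1 : (8:ℝ)/27 < q1 ^ 2 := lt_of_lt_of_le h1 (by nlinarith [sq_nonneg q1])
  have hs2 : (8:ℝ)/27 < q2 ^ 2 := lt_of_lt_of_le h2 (by nlinarith [sq_nonneg q2])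
  have hs3 : (8:ℝ)/27 < q3 ^ 2 := lt_of_lt_of_le h3 (by nlinarith [sq_nonneg q3])
  have k1 : 8/27 * (q2^2 * q3^2) < q1^2 * q2^2 * q3^2 * (a2 + a3) := by
    calc 8/27 * (q2^2 * q3^2) < q1^2 * (a2 + a3) * (q2^2 * q3^2) :=
          mul_lt_mul_of_pos_right h1 (by positivity)
      _ = q1^2 * q2^2 * q3^2 * (a2 + a3) := by ring
  have k2 : 8/27 * (q1^2 * q3^2) < q1^2 * q2^2 * q3^2 * (a1 + a3) := by
    calc 8/27 * (q1^2 * q3^2) < q2^2 * (a1 + a3) * (q1^2 * q3^2) :=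
          mul_lt_mul_of_pos_right h2 (by positivity)
      _ = q1^2 * q2^2 * q3^2 * (a1 + a3) := by ring
  have k3 : 8/27 * (q1^2 * q2^2) < q1^2 * q2^2 * q3^2 * (a1 + a2) := by
    calc 8/27 * (q1^2 * q2^2) < q3^2 * (a1 + a2) * (q1^2 * q2^2) :=
          mul_lt_mul_of_pos_right h3 (by positivity)
      _ = q1^2 * q2^2 * q3^2 * (a1 + a2) := by ring
  have haux := aux_stmt7 q1 q2 q3 hq1a hq2a hq3a hq3b hq
  have hsum : q1^2*q2^2*q3^2*(a2+a3) + q1^2*q2^2*q3^2*(a1+a3) + q1^2*q2^2*q3^2*(a1+a2)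
      = 2*(q1^2*q2^2*q3^2) := by linear_combination 2*(q1^2*q2^2*q3^2)*ha
  linarith [k1, k2, k3, haux, hsum]
end

section
/- There do not exist real numbers q1, q2, q3 ∈ [0,1] with q1 + q2 + q3 = 2 and non-negative real numbers x1, x23, b13, a1, a2, a3 with b13 ≥ 2·x1 ≥ 8·x23 ≥ 0 and (7/2)·x1 + 2·x23 + b13 + a1 + a2 + a3 = 1, such that all three of the following hold: q1·((1/2)·x1 + 2·x23) + q1²·(a2 + a3) > 8/27, q2·(b13 + x1 + x23) + q2²·(a1 + a3) > 8/27, and q3·(3·x1 + x23) + q3²·(a1 + a2) > 8/27. -/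
set_option maxHeartbeats 1000000 in
private lemma key (q A L : ℝ) (h1 : 1/2 ≤ q) (h2 : q ≤ 1) (hA : 0 ≤ A) (hL : 0 ≤ L)
    (hE : 8/27 < q*L + q^2*A) :
    2*q + A + ((9/2)*q^2 - (33/4)*q + 5)*L > 2 + (8/3)*(q-2/3)^2 := by
  nlinarith [hE, mul_nonneg (mul_nonneg hL (sq_nonneg (q-2/3))) (by linarith : (0:ℝ) ≤ q - 1/2),
    mul_nonneg (mul_nonneg (sq_nonneg (q-2/3)) (by linarith : (0:ℝ) ≤ 1-q)) (by linarith : (0:ℝ) ≤ q + 1/4),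
    sq_nonneg q, mul_pos (by linarith : (0:ℝ) < q) (by linarith : (0:ℝ) < q)]

set_option maxHeartbeats 1000000 in
private lemma key2 (q A L : ℝ) (h1 : 8/27 ≤ q) (h2 : q ≤ 1/2) (hA : 0 ≤ A) (hL : 0 ≤ L)
    (hE : 8/27 < q*L + q^2*A) :
    (128/27)*q + A + (43/8 - (27/4)*q)*L > 32/9 + (128/9)*(q-1/2)^2 := by
  nlinarith [hE, mul_nonneg (mul_nonneg hL (by linarith : (0:ℝ) ≤ q - 8/27)) (by linarith : (0:ℝ) ≤ 1/2 - q),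
    mul_nonneg (mul_nonneg (sq_nonneg (q-1/2)) (by linarith : (0:ℝ) ≤ 1/2 - q)) (by linarith : (0:ℝ) ≤ q + 1/6),
    sq_nonneg q, mul_pos (by linarith : (0:ℝ) < q) (by linarith : (0:ℝ) < q)]

set_option maxHeartbeats 1000000 in
private lemma hCC (q1 q2 q3 x1 : ℝ)
    (hsum : q1 + q2 + q3 = 2)
    (hx1 : 0 ≤ x1) (hx1b : x1 ≤ 2/11) :
    (8/3)*((q1-2/3)^2+(q2-2/3)^2+(q3-2/3)^2)
      - (((9/2)*q1^2 - (33/4)*q1 + 5) + (13/4)*((9/2)*q2^2 - (33/4)*q2 + 5)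
        + (13/4)*((9/2)*q3^2 - (33/4)*q3 + 5) - 12) * x1 ≥ 0 := by
  have hsx : (q1 + q2 + q3 - 2) * x1 = 0 := by rw [hsum]; ring
  have t1 : (0:ℝ) ≤ (2/11 - x1)*(q1-2/3)^2 := mul_nonneg (by linarith) (sq_nonneg _)
  have t2 : (0:ℝ) ≤ (2/11 - x1)*(q2-2/3)^2 := mul_nonneg (by linarith) (sq_nonneg _)
  have t3 : (0:ℝ) ≤ (2/11 - x1)*(q3-2/3)^2 := mul_nonneg (by linarith) (sq_nonneg _)
  have t4 : (0:ℝ) ≤ ((7/5)*x1 - (q1-2/3))^2 := sq_nonneg _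
  have t5 : (0:ℝ) ≤ x1*(2/11 - x1) := mul_nonneg hx1 (by linarith)
  nlinarith [t1, t2, t3, t4, t5, hsx, sq_nonneg (q1-2/3), sq_nonneg (q2-2/3), sq_nonneg (q3-2/3)]

set_option maxHeartbeats 1000000 in
private lemma FC (q1 q2 q3 x1 x23 b13 a1 a2 a3 : ℝ)
    (hq1 : 1/2 ≤ q1) (hq1' : q1 ≤ 1) (hq2 : 1/2 ≤ q2) (hq2' : q2 ≤ 1)
    (hq3 : 1/2 ≤ q3) (hq3' : q3 ≤ 1) (hsum : q1 + q2 + q3 = 2)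
    (hx1 : 0 ≤ x1) (hx23 : 0 ≤ x23) (hb : 0 ≤ b13)
    (ha1 : 0 ≤ a1) (ha2 : 0 ≤ a2) (ha3 : 0 ≤ a3)
    (hb2 : b13 ≥ 2*x1) (hx : 2*x1 ≥ 8*x23)
    (hbud : (7/2)*x1 + 2*x23 + b13 + a1 + a2 + a3 = 1) :
    (8/3)*((q1-2/3)^2+(q2-2/3)^2+(q3-2/3)^2) + 2 - 2*(a1+a2+a3)
      - ((9/2)*q1^2 - (33/4)*q1 + 5)*((1/2)*x1 + 2*x23)
      - ((9/2)*q2^2 - (33/4)*q2 + 5)*(b13 + x1 + x23)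
      - ((9/2)*q3^2 - (33/4)*q3 + 5)*(3*x1 + x23) ≥ 0 := by
  have hx1b : x1 ≤ 2/11 := by linarith
  have hA : (2 - ((9/2)*q2^2 - (33/4)*q2 + 5)) * (b13 - 2*x1) ≥ 0 := by
    have h : (0:ℝ) ≤ (q2 - 1/2)*(4/3 - q2) := mul_nonneg (by linarith) (by linarith)
    nlinarith [mul_nonneg h (by linarith : (0:ℝ) ≤ b13 - 2*x1)]
  have hB : (2*((9/2)*q1^2 - (33/4)*q1 + 5) + ((9/2)*q2^2 - (33/4)*q2 + 5)
      + ((9/2)*q3^2 - (33/4)*q3 + 5) - 4) * (2*x1 - 8*x23) ≥ 0 := by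
    have h1 : (39:ℝ)/32 ≤ (9/2)*q1^2 - (33/4)*q1 + 5 := by nlinarith [sq_nonneg (q1 - 11/12)]
    have h2 : (39:ℝ)/32 ≤ (9/2)*q2^2 - (33/4)*q2 + 5 := by nlinarith [sq_nonneg (q2 - 11/12)]
    have h3 : (39:ℝ)/32 ≤ (9/2)*q3^2 - (33/4)*q3 + 5 := by nlinarith [sq_nonneg (q3 - 11/12)]
    apply mul_nonneg (by linarith) (by linarith)
  have hC := hCC q1 q2 q3 x1 hsum hx1 hx1b
  linarith [hA, hB, hC]
set_option maxHeartbeats 2000000 in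
private lemma FC2 (q1 q2 q3 x1 x23 b13 a1 a2 a3 : ℝ)
    (hq1 : 1/2 ≤ q1) (hq1' : q1 ≤ 1) (hq2 : 8/27 ≤ q2) (hq2' : q2 ≤ 1/2)
    (hq3 : 1/2 ≤ q3) (hq3' : q3 ≤ 1) (hsum : q1 + q2 + q3 = 2)
    (hx1 : 0 ≤ x1) (hx23 : 0 ≤ x23) (hb : 0 ≤ b13)
    (ha1 : 0 ≤ a1) (ha2 : 0 ≤ a2) (ha3 : 0 ≤ a3)
    (hb2 : b13 ≥ 2*x1) (hx : 2*x1 ≥ 8*x23)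
    (hbud : (7/2)*x1 + 2*x23 + b13 + a1 + a2 + a3 = 1) :
    (8/3)*((q1-2/3)^2+(q3-2/3)^2) + (128/9)*(q2-1/2)^2 + 4 + 32/9
      - 2*q1 - 2*q3 - (128/27)*q2 - 2*(a1+a2+a3)
      - ((9/2)*q1^2 - (33/4)*q1 + 5)*((1/2)*x1 + 2*x23)
      - (43/8 - (27/4)*q2)*(b13 + x1 + x23)
      - ((9/2)*q3^2 - (33/4)*q3 + 5)*(3*x1 + x23) ≥ 0 := by
  have hx1b : x1 ≤ 2/11 := by linarith
  have hu : (0:ℝ) ≤ 1/2 - q2 := by linarith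
  have ht : (0:ℝ) ≤ 2*x1 - 8*x23 := by linarith
  have hx1u : (0:ℝ) ≤ 2/11 - x1 := by linarith
  -- equality products
  have e1 : ((7/2)*x1 + 2*x23 + b13 + a1 + a2 + a3 - 1)*q1 = 0 := by rw [hbud]; ring
  have e2 : ((7/2)*x1 + 2*x23 + b13 + a1 + a2 + a3 - 1)*q2 = 0 := by rw [hbud]; ring
  have e3 : ((7/2)*x1 + 2*x23 + b13 + a1 + a2 + a3 - 1)*q3 = 0 := by rw [hbud]; ring
  have e4 : (q1 + q2 + q3 - 2)*a1 = 0 := by rw [hsum]; ring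
  have e5 : (q1 + q2 + q3 - 2)*a2 = 0 := by rw [hsum]; ring
  have e6 : (q1 + q2 + q3 - 2)*a3 = 0 := by rw [hsum]; ring
  have e7 : (q1 + q2 + q3 - 2)*b13 = 0 := by rw [hsum]; ring
  have e8 : (q1 + q2 + q3 - 2)*q1 = 0 := by rw [hsum]; ring
  have e9 : (q1 + q2 + q3 - 2)*q2 = 0 := by rw [hsum]; ring
  have e10 : (q1 + q2 + q3 - 2)*q3 = 0 := by rw [hsum]; ring
  have e11 : (q1 + q2 + q3 - 2)*x23 = 0 := by rw [hsum]; ring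
  have e12 : (q1 + q2 + q3 - 2)*x1 = 0 := by rw [hsum]; ring
  -- nonneg facts (exact LP certificate support)
  have f1 : (0:ℝ) ≤ ((q1-2/3) - 2*(1/2-q2))^2 := sq_nonneg _
  have f2 : (0:ℝ) ≤ ((q1-2/3) - 3*(1/2-q2))^2 := sq_nonneg _
  have f3 : (0:ℝ) ≤ ((q1-2/3) - 3*(1/2-q2))^2*(2*x1-8*x23) := mul_nonneg (sq_nonneg _) ht
  have f4 : (0:ℝ) ≤ ((q1-2/3) - 3*(1/2-q2))^2*x1 := mul_nonneg (sq_nonneg _) hx1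
  have f5 : (0:ℝ) ≤ (q2-5/13)^2 := sq_nonneg _
  have f6 : (0:ℝ) ≤ (q2-5/13)^2*(2/11-x1) := mul_nonneg (sq_nonneg _) hx1u
  have f7 : (0:ℝ) ≤ (q3-2/3)^2*(2*x1-8*x23) := mul_nonneg (sq_nonneg _) ht
  have f8 : (0:ℝ) ≤ ((q3-2/3) - (1/2-q2))^2*(2/11-x1) := mul_nonneg (sq_nonneg _) hx1u
  have f9 : (0:ℝ) ≤ ((q3-2/3) - 3*(1/2-q2))^2*x1 := mul_nonneg (sq_nonneg _) hx1
  have f10 : (0:ℝ) ≤ (q3-q1)^2*(2*x1-8*x23) := mul_nonneg (sq_nonneg _) ht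
  have f11 : (0:ℝ) ≤ (q3-q1)^2*(2/11-x1) := mul_nonneg (sq_nonneg _) hx1u
  have f12 : (0:ℝ) ≤ ((q3-q1) - 3*(1/2-q2))^2*(2*x1-8*x23) := mul_nonneg (sq_nonneg _) ht
  have f13 : (0:ℝ) ≤ ((q1+q3-4/3) - 2*(1/2-q2))^2*(2/11-x1) := mul_nonneg (sq_nonneg _) hx1u
  have f14 : (0:ℝ) ≤ ((q1+q3-4/3) - 3*(1/2-q2))^2 := sq_nonneg _
  have f15 : (0:ℝ) ≤ ((q1+q3-4/3) - 3*(1/2-q2))^2*(2*x1-8*x23) := mul_nonneg (sq_nonneg _) ht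
  have f16 : (0:ℝ) ≤ ((q1+q3-4/3) - 3*(1/2-q2))^2*x23 := mul_nonneg (sq_nonneg _) hx23
  have f17 : (0:ℝ) ≤ ((q1+q3-4/3) - (1/2)*(1/2-q2))^2*(2*x1-8*x23) := mul_nonneg (sq_nonneg _) ht
  have f18 : (0:ℝ) ≤ (q1-11/12)^2*(2*x1-8*x23) := mul_nonneg (sq_nonneg _) ht
  have f19 : (0:ℝ) ≤ (q1-11/12)^2*x1 := mul_nonneg (sq_nonneg _) hx1
  have f20 : (0:ℝ) ≤ (q3-11/12)^2*(2/11-x1) := mul_nonneg (sq_nonneg _) hx1u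
  have f21 : (0:ℝ) ≤ (2*x1-8*x23)*(q2-8/27) := mul_nonneg ht (by linarith)
  have f22 : (0:ℝ) ≤ (2*x1-8*x23)*(q3-1/2) := mul_nonneg ht (by linarith)
  have f23 : (0:ℝ) ≤ (1/2-q2)*a1 := mul_nonneg hu ha1
  have f24 : (0:ℝ) ≤ (1/2-q2)*a2 := mul_nonneg hu ha2
  have f25 : (0:ℝ) ≤ (1/2-q2)*a3 := mul_nonneg hu ha3
  have f26 : (0:ℝ) ≤ x1*(1-q1) := mul_nonneg hx1 (by linarith)
  have f27 : (0:ℝ) ≤ x1*(1/2-q2) := mul_nonneg hx1 hu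
  linarith [e1,e2,e3,e4,e5,e6,e7,e8,e9,e10,e11,e12,
    f1,f2,f3,f4,f5,f6,f7,f8,f9,f10,f11,f12,f13,f14,f15,f16,f17,f18,f19,f20,
    f21,f22,f23,f24,f25,f26,f27]

set_option maxHeartbeats 2000000 in
/-- Nonexistence of solutions to System1b. -/
theorem stmt_9 :
    ¬ ∃ (q1 q2 q3 x1 x23 b13 a1 a2 a3 : ℝ),
      q1 ∈ Set.Icc (0:ℝ) 1 ∧ q2 ∈ Set.Icc (0:ℝ) 1 ∧ q3 ∈ Set.Icc (0:ℝ) 1 ∧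
      q1 + q2 + q3 = 2 ∧
      0 ≤ x1 ∧ 0 ≤ x23 ∧ 0 ≤ b13 ∧ 0 ≤ a1 ∧ 0 ≤ a2 ∧ 0 ≤ a3 ∧
      b13 ≥ 2 * x1 ∧ 2 * x1 ≥ 8 * x23 ∧ 8 * x23 ≥ 0 ∧
      (7 / 2) * x1 + 2 * x23 + b13 + a1 + a2 + a3 = 1 ∧
      q1 * ((1 / 2) * x1 + 2 * x23) + q1 ^ 2 * (a2 + a3) > 8 / 27 ∧
      q2 * (b13 + x1 + x23) + q2 ^ 2 * (a1 + a3) > 8 / 27 ∧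
      q3 * (3 * x1 + x23) + q3 ^ 2 * (a1 + a2) > 8 / 27 := by
  rintro ⟨q1, q2, q3, x1, x23, b13, a1, a2, a3, hm1, hm2, hm3, hsum,
    hx1, hx23, hb, ha1, ha2, ha3, hb2, hx, -, hbud, h1, h2, h3⟩
  obtain ⟨hq1, hq1'⟩ := hm1
  obtain ⟨hq2, hq2'⟩ := hm2
  obtain ⟨hq3, hq3'⟩ := hm3
  -- q1 > 1/2 and q3 > 1/2 always
  have hq1h : 1/2 ≤ q1 := by
    by_contra hc
    push_neg at hc
    have p1 : (0:ℝ) ≤ (1/2 - q1) * ((1/2)*x1 + 2*x23) :=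
      mul_nonneg (by linarith) (by linarith)
    have p2 : (0:ℝ) ≤ (1/2 - q1) * (1/2 + q1) * (a2 + a3) :=
      mul_nonneg (mul_nonneg (by linarith) (by linarith)) (by linarith)
    nlinarith [h1, p1, p2]
  have hq3h : 1/2 ≤ q3 := by
    by_contra hc
    push_neg at hc
    have p1 : (0:ℝ) ≤ (1/2 - q3) * (3*x1 + x23) :=
      mul_nonneg (by linarith) (by linarith)
    have p2 : (0:ℝ) ≤ (1/2 - q3) * (1/2 + q3) * (a1 + a2) :=
      mul_nonneg (mul_nonneg (by linarith) (by linarith)) (by linarith)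
    nlinarith [h3, p1, p2]
  rcases le_or_gt (1/2 : ℝ) q2 with hq2h | hq2h
  · -- main case: all q ≥ 1/2
    have K1 := key q1 (a2+a3) ((1/2)*x1 + 2*x23) hq1h hq1' (by linarith) (by linarith) h1
    have K2 := key q2 (a1+a3) (b13 + x1 + x23) hq2h hq2' (by linarith) (by linarith) h2
    have K3 := key q3 (a1+a2) (3*x1 + x23) hq3h hq3' (by linarith) (by linarith) h3
    have hFC := FC q1 q2 q3 x1 x23 b13 a1 a2 a3 hq1h hq1' hq2h hq2' hq3h hq3'
      hsum hx1 hx23 hb ha1 ha2 ha3 hb2 hx hbud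
    linarith [K1, K2, K3, hFC]
  · -- case q2 < 1/2
    have hq2l : 8/27 ≤ q2 := by
      by_contra hc
      push_neg at hc
      have p1 : (0:ℝ) ≤ q2 * (1 - q2) * (a1 + a3) :=
        mul_nonneg (mul_nonneg hq2 (by linarith)) (by linarith)
      have p2 : (0:ℝ) ≤ q2 * ((5/2)*x1 + x23 + a2) :=
        mul_nonneg hq2 (by linarith)
      have eq2 : ((7/2)*x1 + 2*x23 + b13 + a1 + a2 + a3 - 1) * q2 = 0 := by
        rw [hbud]; ring
      nlinarith [h2, p1, p2, eq2]
    have K1 := key q1 (a2+a3) ((1/2)*x1 + 2*x23) hq1h hq1' (by linarith) (by linarith) h1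
    have K2 := key2 q2 (a1+a3) (b13 + x1 + x23) hq2l (le_of_lt hq2h) (by linarith) (by linarith) h2
    have K3 := key q3 (a1+a2) (3*x1 + x23) hq3h hq3' (by linarith) (by linarith) h3
    have hFC2 := FC2 q1 q2 q3 x1 x23 b13 a1 a2 a3 hq1h hq1' hq2l (le_of_lt hq2h) hq3h hq3'
      hsum hx1 hx23 hb ha1 ha2 ha3 hb2 hx hbud
    linarith [K1, K2, K3, hFC2]
end

section
/- There do not exist real numbers q1, q2, q3 ∈ [0,1] with q1 + q2 + q3 = 2 and non-negative real numbers x2, x3, b12, a1, a2, a3 with b12 ≥ 8·x2 ≥ 8·x3 ≥ 0 and 15·x2 + x3 + b12 + a1 + a2 + a3 = 1, such that all three of the following hold: q1·(3·x2 + x3) + q1²·(a2 + a3) > 8/27, q2·(12·x2 + x3) + q2²·(a1 + a3) > 8/27, and q3·(b12 + 5·x2) + q3²·(a1 + a2) > 8/27. -/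
-- cubic positivity lemmas
lemma hp1 (q : ℝ) (h0 : 0 < q) (h1 : q ≤ 1) : 0 ≤ 184/27 - 4*q - 26*q^2 + 26*q^3 := by
  nlinarith [sq_nonneg (q - 3/4), mul_nonneg (sub_nonneg.mpr h1) (sq_nonneg (q - 3/4)),
    mul_nonneg h0.le (sq_nonneg (q - 3/4)), sq_nonneg q, h0.le]

lemma hp2 (q : ℝ) (h0 : 0 < q) (h1 : q ≤ 1) : 0 ≤ 184/27 - 13*q - 12*q^2 + 26*q^3 := by
  nlinarith [sq_nonneg (q - 3/5), mul_nonneg (sub_nonneg.mpr h1) (sq_nonneg (q - 3/5)),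
    mul_nonneg h0.le (sq_nonneg (q - 3/5)), sq_nonneg q, h0.le]

lemma hp3 (q : ℝ) (h0 : 0 < q) (h1 : q ≤ 1/2) : 0 ≤ 8/27 - q - (2/23)*q^2 + 2*q^3 := by
  nlinarith [sq_nonneg (q - 2/5), mul_nonneg (sub_nonneg.mpr h1) (sq_nonneg (q - 2/5)),
    mul_nonneg h0.le (sq_nonneg (q - 2/5)), sq_nonneg q, h0.le]

lemma hp0 (q : ℝ) (h0 : 0 < q) : 0 ≤ 8/27 - 2*q^2 + 2*q^3 := by
  nlinarith [mul_nonneg (sq_nonneg (3*q-2)) h0.le, sq_nonneg (3*q-2)]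

lemma monrel (q r : ℝ) (hr : q * r = 1) :
    q*r^2 = r ∧ q^2*r^2 = 1 ∧ q^3*r^2 = q := by
  refine ⟨?_, ?_, ?_⟩
  · calc q*r^2 = (q*r)*r := by ring
      _ = r := by rw [hr]; ring
  · calc q^2*r^2 = (q*r)*(q*r) := by ring
      _ = 1 := by rw [hr]; ring
  · calc q^3*r^2 = (q*r)*(q*r)*q := by ring
      _ = q := by rw [hr]; ring

lemma slack_nn (q r : ℝ) (h0 : 0 < q) (hr : q * r = 1) : 0 ≤ 8/27*r^2 - 2 + 2*q := by
  obtain ⟨e1, e2, e3⟩ := monrel q r hr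
  nlinarith [mul_nonneg (hp0 q h0) (sq_nonneg r), e1, e2, e3]

lemma T1 (q r : ℝ) (h0 : 0 < q) (h1 : q ≤ 1) (hr : q * r = 1) :
    4*r + 20*q - 20 ≤ 23*(8/27*r^2 - 2 + 2*q) := by
  obtain ⟨e1, e2, e3⟩ := monrel q r hr
  nlinarith [mul_nonneg (hp1 q h0 h1) (sq_nonneg r), e1, e2, e3]

lemma T2 (q r : ℝ) (h0 : 0 < q) (h1 : q ≤ 1) (hr : q * r = 1) :
    13*r + 20*q - 34 ≤ 23*(8/27*r^2 - 2 + 2*q) := by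
  obtain ⟨e1, e2, e3⟩ := monrel q r hr
  nlinarith [mul_nonneg (hp2 q h0 h1) (sq_nonneg r), e1, e2, e3]

lemma T3 (q r : ℝ) (h0 : 0 < q) (h1 : q ≤ 1/2) (hr : q * r = 1) :
    r - 2 + 2/23 ≤ 8/27*r^2 - 2 + 2*q := by
  obtain ⟨e1, e2, e3⟩ := monrel q r hr
  nlinarith [mul_nonneg (hp3 q h0 h1) (sq_nonneg r), e1, e2, e3]

set_option maxHeartbeats 2000000 in
/-- Nonexistence of solutions to System1d. -/
theorem stmt_11 :
    ¬ ∃ (q1 q2 q3 x2 x3 b12 a1 a2 a3 : ℝ),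
      q1 ∈ Set.Icc (0:ℝ) 1 ∧ q2 ∈ Set.Icc (0:ℝ) 1 ∧ q3 ∈ Set.Icc (0:ℝ) 1 ∧
      q1 + q2 + q3 = 2 ∧
      0 ≤ x2 ∧ 0 ≤ x3 ∧ 0 ≤ b12 ∧ 0 ≤ a1 ∧ 0 ≤ a2 ∧ 0 ≤ a3 ∧
      b12 ≥ 8 * x2 ∧ 8 * x2 ≥ 8 * x3 ∧ 8 * x3 ≥ 0 ∧
      15 * x2 + x3 + b12 + a1 + a2 + a3 = 1 ∧
      q1 * (3 * x2 + x3) + q1 ^ 2 * (a2 + a3) > 8 / 27 ∧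
      q2 * (12 * x2 + x3) + q2 ^ 2 * (a1 + a3) > 8 / 27 ∧
      q3 * (b12 + 5 * x2) + q3 ^ 2 * (a1 + a2) > 8 / 27 := by
  rintro ⟨q1,q2,q3,x2,x3,b12,a1,a2,a3,⟨hq10,hq11⟩,⟨hq20,hq21⟩,⟨hq30,hq31⟩,hs,hx2,hx3,hb,ha1,ha2,ha3,hb8,hxx,-,htot,h1,h2,h3⟩
  -- positivity of the q's
  have hq1p : 0 < q1 := by
    rcases hq10.lt_or_eq with h | h
    · exact h
    · rw [← h] at h1; norm_num at h1
  have hq2p : 0 < q2 := by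
    rcases hq20.lt_or_eq with h | h
    · exact h
    · rw [← h] at h2; norm_num at h2
  have hq3p : 0 < q3 := by
    rcases hq30.lt_or_eq with h | h
    · exact h
    · rw [← h] at h3; norm_num at h3
  set r1 := q1⁻¹ with hr1def
  set r2 := q2⁻¹ with hr2def
  set r3 := q3⁻¹ with hr3def
  have hr1 : q1 * r1 = 1 := mul_inv_cancel₀ hq1p.ne'
  have hr2 : q2 * r2 = 1 := mul_inv_cancel₀ hq2p.ne'
  have hr3 : q3 * r3 = 1 := mul_inv_cancel₀ hq3p.ne'
  have hr1p : 0 < r1 := inv_pos.mpr hq1p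
  have hr2p : 0 < r2 := inv_pos.mpr hq2p
  have hr3p : 0 < r3 := inv_pos.mpr hq3p
  have hr1ge : 1 ≤ r1 := by linarith [mul_nonneg (by linarith : (0:ℝ) ≤ 1 - q1) hr1p.le, hr1]
  have hr2ge : 1 ≤ r2 := by linarith [mul_nonneg (by linarith : (0:ℝ) ≤ 1 - q2) hr2p.le, hr2]
  have hr3ge : 1 ≤ r3 := by linarith [mul_nonneg (by linarith : (0:ℝ) ≤ 1 - q3) hr3p.le, hr3]
  -- key inequalities
  have key1 : (3*x2+x3)*r1 + (a2+a3) > 8/27*r1^2 := by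
    have h := mul_lt_mul_of_pos_right h1 (pow_pos hr1p 2)
    have e : (q1 * (3 * x2 + x3) + q1 ^ 2 * (a2 + a3)) * r1 ^ 2
        = (3*x2+x3)*((q1*r1)*r1) + (a2+a3)*((q1*r1)*(q1*r1)) := by ring
    rw [hr1] at e
    linarith [h, e.le, e.ge]
  have key2 : (12*x2+x3)*r2 + (a1+a3) > 8/27*r2^2 := by
    have h := mul_lt_mul_of_pos_right h2 (pow_pos hr2p 2)
    have e : (q2 * (12 * x2 + x3) + q2 ^ 2 * (a1 + a3)) * r2 ^ 2
        = (12*x2+x3)*((q2*r2)*r2) + (a1+a3)*((q2*r2)*(q2*r2)) := by ring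
    rw [hr2] at e
    linarith [h, e.le, e.ge]
  have key3 : (b12+5*x2)*r3 + (a1+a2) > 8/27*r3^2 := by
    have h := mul_lt_mul_of_pos_right h3 (pow_pos hr3p 2)
    have e : (q3 * (b12 + 5 * x2) + q3 ^ 2 * (a1 + a2)) * r3 ^ 2
        = (b12+5*x2)*((q3*r3)*r3) + (a1+a2)*((q3*r3)*(q3*r3)) := by ring
    rw [hr3] at e
    linarith [h, e.le, e.ge]
  -- budget facts
  have hx2le : x2 ≤ 1/23 := by linarith
  have hsl1 := slack_nn q1 r1 hq1p hr1
  have hsl2 := slack_nn q2 r2 hq2p hr2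
  have hsl3 := slack_nn q3 r3 hq3p hr3
  have hxq : x2*q1 + x2*q2 + x2*q3 = 2*x2 := by
    have : x2*(q1+q2+q3) = x2*2 := by rw [hs]
    linarith [this]
  -- merge x3 into x2
  have hmerge : x3*r1 + x3*r2 ≤ x2*r1 + x2*r2 - 2*x2 + 2*x3 := by
    linarith [mul_nonneg (by linarith : (0:ℝ) ≤ x2 - x3) (by linarith : (0:ℝ) ≤ r1 + r2 - 2)]
  -- per-variable x2 bounds
  have pA1 : x2*(4*r1+20*q1-20) ≤ 8/27*r1^2 - 2 + 2*q1 := by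
    linarith [mul_nonneg (by linarith : (0:ℝ) ≤ 1 - 23*x2) hsl1,
      mul_nonneg hx2 (by linarith [T1 q1 r1 hq1p hq11 hr1] : (0:ℝ) ≤ 23*(8/27*r1^2 - 2 + 2*q1) - (4*r1+20*q1-20))]
  have pA2 : x2*(13*r2+20*q2-34) ≤ 8/27*r2^2 - 2 + 2*q2 := by
    linarith [mul_nonneg (by linarith : (0:ℝ) ≤ 1 - 23*x2) hsl2,
      mul_nonneg hx2 (by linarith [T2 q2 r2 hq2p hq21 hr2] : (0:ℝ) ≤ 23*(8/27*r2^2 - 2 + 2*q2) - (13*r2+20*q2-34))]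
  -- star inequality
  have star : (3*x2+x3)*r1 + (12*x2+x3)*r2 + (b12+5*x2)*r3 ≤
      (8/27*r1^2 - 2 + 2*q1) + (8/27*r2^2 - 2 + 2*q2) + (8/27*r3^2 - 2 + 2*q3)
        + 30*x2 + 2*x3 + 2*b12 := by
    rcases le_or_gt r3 2 with hA | hB
    · -- case A : r3 ≤ 2
      have pA3 : x2*(13*r3+20*q3-34) ≤ 8/27*r3^2 - 2 + 2*q3 := by
        linarith [mul_nonneg (by linarith : (0:ℝ) ≤ 1 - 23*x2) hsl3,
          mul_nonneg hx2 (by linarith [T2 q3 r3 hq3p hq31 hr3] : (0:ℝ) ≤ 23*(8/27*r3^2 - 2 + 2*q3) - (13*r3+20*q3-34))]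
      have bA : b12*r3 ≤ 8*x2*r3 - 16*x2 + 2*b12 := by
        linarith [mul_nonneg (by linarith : (0:ℝ) ≤ b12 - 8*x2) (by linarith : (0:ℝ) ≤ 2 - r3)]
      linarith [hmerge, bA, pA1, pA2, pA3, hxq]
    · -- case B : r3 > 2
      have hq3half : q3 ≤ 1/2 := by linarith [mul_nonneg hq3p.le (by linarith : (0:ℝ) ≤ r3 - 2), hr3]
      have bB : b12*r3 ≤ 8*x2*r3 - 16*x2 + (1-23*x2)*(r3-2) + 2*b12 := by
        linarith [mul_nonneg (by linarith : (0:ℝ) ≤ (1-23*x2) - (b12 - 8*x2)) (by linarith : (0:ℝ) ≤ r3 - 2)]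
      have pB3 : x2*(20*q3-10*r3+12) ≤ 2/23 := by
        linarith [mul_nonneg (by linarith : (0:ℝ) ≤ 1/23 - x2) (by norm_num : (0:ℝ) ≤ 2),
          mul_nonneg hx2 (by linarith [hB, hq3half] : (0:ℝ) ≤ 10*r3 - 20*q3 - 10)]
      have t3 := T3 q3 r3 hq3p hq3half hr3
      linarith [hmerge, bB, pA1, pA2, pB3, t3, hxq]
  -- final contradiction
  linarith [key1, key2, key3, star, htot, hs]
end

section
/- There do not exist real numbers q1, q2, q3 ∈ [0,1] with q1 + q2 + q3 = 2 and non-negative real numbers A, B, C, a1, a2, a3 with C ≥ B ≥ A ≥ 0 and (1/4)·A + B + C + a1 + a2 + a3 = 1, such that all three of the following hold: q1·B + q1²·(a2 + a3) > 8/27, q2·A + q2²·(a1 + a3) > 8/27, and q3·C + q3²·(a1 + a2) > 8/27. -/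
set_option maxHeartbeats 1000000

/-- Nonexistence of solutions to System1e. -/
theorem stmt_12 :
    ¬ ∃ (q1 q2 q3 A B C a1 a2 a3 : ℝ),
      q1 ∈ Set.Icc (0:ℝ) 1 ∧ q2 ∈ Set.Icc (0:ℝ) 1 ∧ q3 ∈ Set.Icc (0:ℝ) 1 ∧
      q1 + q2 + q3 = 2 ∧
      0 ≤ A ∧ 0 ≤ B ∧ 0 ≤ C ∧ 0 ≤ a1 ∧ 0 ≤ a2 ∧ 0 ≤ a3 ∧
      C ≥ B ∧ B ≥ A ∧ A ≥ 0 ∧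
      (1 / 4) * A + B + C + a1 + a2 + a3 = 1 ∧
      q1 * B + q1 ^ 2 * (a2 + a3) > 8 / 27 ∧
      q2 * A + q2 ^ 2 * (a1 + a3) > 8 / 27 ∧
      q3 * C + q3 ^ 2 * (a1 + a2) > 8 / 27 := by
  rintro ⟨q1,q2,q3,A,B,C,a1,a2,a3,⟨hq10,hq11⟩,⟨hq20,hq21⟩,⟨hq30,hq31⟩,hsum,hA,hB,hC,
    ha1,ha2,ha3,hCB,hBA,-,hbud,h1,h2,h3⟩
  -- coefficient nonnegativity facts
  have hcu : (0:ℝ) ≤ 2/3 - ((1-q1)*q1 + (1-q2)*q2 + (1-q3)*q3) := by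
    nlinarith [sq_nonneg (q1-q2), sq_nonneg (q2-q3), sq_nonneg (q1-q3)]
  have hcv : (0:ℝ) ≤ 16/27 - (1-q1)*q1 - (1-q3)*q3 := by
    nlinarith [sq_nonneg (2*q1-1), sq_nonneg (2*q3-1)]
  have hcw : (0:ℝ) ≤ 8/27 - (1-q3)*q3 := by nlinarith [sq_nonneg (2*q3-1)]
  have key : ∀ q : ℝ, 0 ≤ q → (1-q)*q^2 ≤ 4/27 := by
    intro q hq
    have h' : (0:ℝ) ≤ (3*q-2)^2*(3*q+1) := mul_nonneg (sq_nonneg _) (by linarith)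
    nlinarith [h']
  have hca1 : (0:ℝ) ≤ 8/27 - (1-q2)*q2^2 - (1-q3)*q3^2 := by
    have := key q2 hq20; have := key q3 hq30; linarith
  have hca2 : (0:ℝ) ≤ 8/27 - (1-q1)*q1^2 - (1-q3)*q3^2 := by
    have := key q1 hq10; have := key q3 hq30; linarith
  have hca3 : (0:ℝ) ≤ 8/27 - (1-q1)*q1^2 - (1-q2)*q2^2 := by
    have := key q1 hq10; have := key q2 hq20; linarith
  -- products with resources
  have P0 := mul_nonneg hA hcu
  have P1 := mul_nonneg (sub_nonneg.2 hBA) hcv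
  have P2 := mul_nonneg (sub_nonneg.2 hCB) hcw
  have P3 := mul_nonneg ha1 hca1
  have P4 := mul_nonneg ha2 hca2
  have P5 := mul_nonneg ha3 hca3
  -- weighted sums of the main inequalities
  have w1 : (0:ℝ) ≤ (1-q1) * (q1 * B + q1 ^ 2 * (a2 + a3) - 8/27) :=
    mul_nonneg (by linarith) (by linarith)
  have w2 : (0:ℝ) ≤ (1-q2) * (q2 * A + q2 ^ 2 * (a1 + a3) - 8/27) :=
    mul_nonneg (by linarith) (by linarith)
  have w3 : (0:ℝ) ≤ (1-q3) * (q3 * C + q3 ^ 2 * (a1 + a2) - 8/27) :=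
    mul_nonneg (by linarith) (by linarith)
  have hlt : q1 < 1 ∨ q2 < 1 ∨ q3 < 1 := by
    by_contra h; push_neg at h; linarith [h.1, h.2.1, h.2.2]
  rcases hlt with h | h | h
  · have s1 : (0:ℝ) < (1-q1) * (q1 * B + q1 ^ 2 * (a2 + a3) - 8/27) :=
      mul_pos (by linarith) (by linarith)
    linarith [s1, w2, w3, P0, P1, P2, P3, P4, P5]
  · have s2 : (0:ℝ) < (1-q2) * (q2 * A + q2 ^ 2 * (a1 + a3) - 8/27) :=
      mul_pos (by linarith) (by linarith)
    linarith [w1, s2, w3, P0, P1, P2, P3, P4, P5]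
  · have s3 : (0:ℝ) < (1-q3) * (q3 * C + q3 ^ 2 * (a1 + a2) - 8/27) :=
      mul_pos (by linarith) (by linarith)
    linarith [w1, w2, s3, P0, P1, P2, P3, P4, P5]
end

section
/- Let A, a1, a2, a3 be non-negative real numbers with (9/4)·A + a1 + a2 + a3 = 1. Then 3·A + √(A² + (32/27)·(a2 + a3)) + √(A² + (32/27)·(a1 + a3)) + √(A² + (32/27)·(a1 + a2)) ≤ 8/3. -/
lemma sqrt_le_tangent (x c : ℝ) (hx : 0 ≤ x) (hc : 0 < c) :
    Real.sqrt x ≤ x / (2 * c) + c / 2 := by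
  have h := Real.sq_sqrt hx
  rw [div_add_div _ _ (by positivity) (by norm_num), le_div_iff₀ (by positivity)]
  nlinarith [sq_nonneg (Real.sqrt x - c), Real.sqrt_nonneg x]

/-- The boundary-case inequality in the case `A = B = C`. -/
theorem stmt_16 (A a1 a2 a3 : ℝ)
    (hA : 0 ≤ A) (ha1 : 0 ≤ a1) (ha2 : 0 ≤ a2) (ha3 : 0 ≤ a3)
    (hsum : (9 / 4) * A + a1 + a2 + a3 = 1) :
    3 * A + Real.sqrt (A ^ 2 + (32 / 27) * (a2 + a3)) +
      Real.sqrt (A ^ 2 + (32 / 27) * (a1 + a3)) +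
      Real.sqrt (A ^ 2 + (32 / 27) * (a1 + a2)) ≤ 8 / 3 := by
  have hc : (0:ℝ) < 8 / 9 - A := by nlinarith
  have h1 := sqrt_le_tangent (A ^ 2 + (32 / 27) * (a2 + a3)) (8/9 - A) (by positivity) hc
  have h2 := sqrt_le_tangent (A ^ 2 + (32 / 27) * (a1 + a3)) (8/9 - A) (by positivity) hc
  have h3 := sqrt_le_tangent (A ^ 2 + (32 / 27) * (a1 + a2)) (8/9 - A) (by positivity) hc
  rw [div_add_div _ _ (by positivity) (by norm_num),
    le_div_iff₀ (by positivity)] at h1 h2 h3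
  nlinarith [h1, h2, h3]
end

section
/- Let A, C, a3 be real numbers with 0 ≤ A ≤ C, a3 ≥ 0, and (5/4)·A + C + a3 = 1. Then 2·A + 2·C + 2·√(A² + (32/27)·a3) ≤ 8/3. -/
/-- The boundary-case inequality in the case `A = B`, `a1 = a2 = 0`. -/
theorem stmt_18 (A C a3 : ℝ) (hA : 0 ≤ A) (hAC : A ≤ C) (ha3 : 0 ≤ a3)
    (hsum : (5 / 4) * A + C + a3 = 1) :
    2 * A + 2 * C + 2 * Real.sqrt (A ^ 2 + (32 / 27) * a3) ≤ 8 / 3 := by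
  have key : Real.sqrt (A ^ 2 + (32 / 27) * a3) ≤ 1/3 + A/4 + a3 := by
    rw [Real.sqrt_le_iff]
    constructor
    · linarith
    · have h : (0:ℝ) ≤ 1 - (9/4)*A - a3 := by nlinarith
      nlinarith [sq_nonneg (4*a3 - (6/5)*(1 - (9/4)*A - a3)),
        mul_nonneg h hA, mul_nonneg ha3 h, h, mul_nonneg h h]
  linarith
end

section
/- Let A, C, a2 be real numbers with 0 ≤ A ≤ C, a2 ≥ 0, and (7/12)·A + (5/3)·C + a2 = 1. Then A + 3·C + √(A² + (32/27)·a2) + √(C² + (32/27)·a2) ≤ 8/3. -/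
set_option maxHeartbeats 1000000 in
/-- The boundary-case inequality in the case `B = C`, `a1 = a3 = 0`. -/
theorem stmt_19 (A C a2 : ℝ) (hA : 0 ≤ A) (hAC : A ≤ C) (ha2 : 0 ≤ a2)
    (hsum : (7 / 12) * A + (5 / 3) * C + a2 = 1) :
    A + 3 * C + Real.sqrt (A ^ 2 + (32 / 27) * a2) +
      Real.sqrt (C ^ 2 + (32 / 27) * a2) ≤ 8 / 3 := by
  set s := Real.sqrt (A ^ 2 + (32 / 27) * a2) with hs
  set t := Real.sqrt (C ^ 2 + (32 / 27) * a2) with ht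
  have hs0 : 0 ≤ s := Real.sqrt_nonneg _
  have ht0 : 0 ≤ t := Real.sqrt_nonneg _
  have hs2 : s ^ 2 = A ^ 2 + (32 / 27) * a2 := by
    rw [hs]; exact Real.sq_sqrt (by nlinarith)
  have ht2 : t ^ 2 = C ^ 2 + (32 / 27) * a2 := by
    rw [ht]; exact Real.sq_sqrt (by nlinarith)
  have hR : 0 ≤ 8 / 3 - A - 3 * C := by nlinarith
  have hpoly : 2 * (A ^ 2 + C ^ 2) + (128 / 27) * a2 ≤ (8 / 3 - A - 3 * C) ^ 2 := by
    nlinarith [sq_nonneg (A - C), sq_nonneg (A + C - 8/9), mul_nonneg ha2 ha2,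
      mul_nonneg (sub_nonneg.2 hAC) ha2, mul_nonneg hA ha2,
      mul_nonneg hA (sub_nonneg.2 hAC), sq_nonneg (C - 4/9), sq_nonneg a2]
  have hsq : (s + t) ^ 2 ≤ (8 / 3 - A - 3 * C) ^ 2 := by
    nlinarith [sq_nonneg (s - t)]
  nlinarith [hsq, add_nonneg hs0 ht0, hR, sq_nonneg (s + t + (8 / 3 - A - 3 * C))]
end
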